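/- arXiv:2312.03334 — 2 statements merged into one kernel-verified Lean document; each statement's English description precedes it below -/
import Mathlib

section
/- Let T be a self-similar tree, let A be a covering quotient of T, and let Ā be a minimal covering quotient of T. Then there exists a covering morphism p : A → Ā. -/
/-- A rooted directed multigraph. -/
structure RGraph where
  V : Type
  E : Type
  s : E → V
  t : E → V
  root : V

namespace RGraph

/-- `l` is a path: consecutive edges are composable. -/
def IsPath (A : RGraph) (l : List A.E) : Prop :=
  l.Chain' (fun e f => A.t e = A.s f)

/-- `l` is a path starting at the vertex `q`. -/
def PathFrom (A : RGraph) (q : A.V) (l : List A.E) : Prop :=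
  A.IsPath l ∧ ∀ e ∈ l.head?, A.s e = q

/-- The target of the path `l` started at `q` (equal to `q` for the empty path). -/
def pathTarget (A : RGraph) (q : A.V) (l : List A.E) : A.V :=
  l.foldl (fun _ e => A.t e) q

@[simp] lemma pathTarget_nil (A : RGraph) (q : A.V) : A.pathTarget q [] = q := rfl

@[simp] lemma pathTarget_cons (A : RGraph) (q : A.V) (a : A.E) (l : List A.E) :
    A.pathTarget q (a :: l) = A.pathTarget (A.t a) l := rfl

lemma pathTarget_append (A : RGraph) (q : A.V) (l l' : List A.E) :
    A.pathTarget q (l ++ l') = A.pathTarget (A.pathTarget q l) l' := by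
  simp [pathTarget]

@[simp] lemma pathTarget_append_single (A : RGraph) (q : A.V) (l : List A.E) (e : A.E) :
    A.pathTarget q (l ++ [e]) = A.t e := by
  rw [pathTarget_append]; rfl

lemma pathFrom_nil (A : RGraph) (q : A.V) : A.PathFrom q [] :=
  ⟨List.isChain_nil, by simp⟩

lemma pathTarget_getLast {A : RGraph} {q : A.V} {l : List A.E} {x : A.E}
    (hx : x ∈ l.getLast?) : A.pathTarget q l = A.t x := by
  induction l generalizing q with
  | nil => simp at hx
  | cons a l ih =>
    cases l with
    | nil => simp at hx; subst hx; rfl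
    | cons b l =>
      rw [List.getLast?_cons_cons] at hx
      simpa using ih (q := A.t a) hx

lemma pathFrom_append_single {A : RGraph} {q : A.V} {l : List A.E} {e : A.E}
    (h : A.PathFrom q l) (he : A.s e = A.pathTarget q l) :
    A.PathFrom q (l ++ [e]) := by
  constructor
  · apply List.isChain_append.mpr
    refine ⟨h.1, List.isChain_singleton _, ?_⟩
    intro x hx y hy
    simp at hy
    subst hy
    rw [he]
    exact (pathTarget_getLast hx).symm
  · intro f hf
    cases l with
    | nil =>
      simp at hf
      subst hf
      simpa using he
    | cons a l =>
      simp at hf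
      subst hf
      exact h.2 a (by simp)

/-- `w` is reachable from `q` by an oriented path. -/
def Reach (A : RGraph) (q w : A.V) : Prop :=
  ∃ l, A.PathFrom q l ∧ A.pathTarget q l = w

lemma reach_self (A : RGraph) (q : A.V) : A.Reach q q :=
  ⟨[], A.pathFrom_nil q, rfl⟩

lemma reach_target {A : RGraph} {q : A.V} {e : A.E} (h : A.Reach q (A.s e)) :
    A.Reach q (A.t e) := by
  obtain ⟨l, hl, ht⟩ := h
  exact ⟨l ++ [e], pathFrom_append_single hl ht.symm, by simp⟩

/-- A graph is connected (as a rooted directed graph) if every vertex is reachable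
from the root. -/
def Connected (A : RGraph) : Prop := ∀ w : A.V, A.Reach A.root w

/-- A graph is a tree if the target map from paths emanating from the root to
vertices is a bijection. -/
def IsTree (A : RGraph) : Prop :=
  Function.Bijective
    (fun l : {l : List A.E // A.PathFrom A.root l} => A.pathTarget A.root l.1)

/-- A graph is locally finite if every vertex has finitely many outgoing edges. -/
def LocallyFinite (A : RGraph) : Prop := ∀ q : A.V, Finite {e : A.E // A.s e = q}

/-- Adjacency: there is an edge from `v` to `w`. -/
def Adj (A : RGraph) (v w : A.V) : Prop := ∃ e, A.s e = v ∧ A.t e = w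

/-- The induced rooted subgraph on all vertices reachable from `q` (the "cone" at `q`). -/
def subgraph (A : RGraph) (q : A.V) : RGraph where
  V := {w // A.Reach q w}
  E := {e // A.Reach q (A.s e)}
  s := fun e => ⟨A.s e.1, e.2⟩
  t := fun e => ⟨A.t e.1, reach_target e.2⟩
  root := ⟨q, A.reach_self q⟩

/-- The truncation of the cone at `v` to vertices at distance at most `d` from `v`. -/
def trunc (A : RGraph) (v : A.V) (d : ℕ) : RGraph where
  V := {w // ∃ l, A.PathFrom v l ∧ A.pathTarget v l = w ∧ l.length ≤ d}
  E := {e // ∃ l, A.PathFrom v l ∧ A.pathTarget v l = A.s e ∧ l.length < d}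
  s := fun e => ⟨A.s e.1, e.2.imp fun _ h => ⟨h.1, h.2.1, h.2.2.le⟩⟩
  t := fun e => ⟨A.t e.1, by
    obtain ⟨l, h1, h2, h3⟩ := e.2
    exact ⟨l ++ [e.1], pathFrom_append_single h1 h2.symm, by simp,
      by simp only [List.length_append, List.length_singleton]; omega⟩⟩
  root := ⟨v, [], A.pathFrom_nil v, rfl, Nat.zero_le d⟩

/-- The universal covering tree of `A`: vertices are the paths emanating from the root. -/
def cover (A : RGraph) : RGraph where
  V := {l : List A.E // A.PathFrom A.root l}
  E := {x : {l : List A.E // A.PathFrom A.root l} × A.E //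
          A.s x.2 = A.pathTarget A.root x.1.1}
  s := fun x => x.1.1
  t := fun x => ⟨x.1.1.1 ++ [x.1.2], pathFrom_append_single x.1.1.2 x.2⟩
  root := ⟨[], A.pathFrom_nil _⟩

end RGraph

/-- A morphism of rooted directed multigraphs. -/
structure GraphHom (A B : RGraph) where
  v : A.V → B.V
  e : A.E → B.E
  root_eq : v A.root = B.root
  s_eq : ∀ x, B.s (e x) = v (A.s x)
  t_eq : ∀ x, B.t (e x) = v (A.t x)

namespace GraphHom

variable {A B : RGraph}

/-- The unique path lifting property. -/
def UPLP (p : GraphHom A B) : Prop :=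
  ∀ (q : A.V) (l' : List B.E), B.PathFrom (p.v q) l' →
    ∃! l : List A.E, A.PathFrom q l ∧ l.map p.e = l'

/-- A covering morphism: surjective on vertices, with the unique path lifting property. -/
def IsCovering (p : GraphHom A B) : Prop := Function.Surjective p.v ∧ p.UPLP

/-- An isomorphism of graphs: bijective on vertices and on edges. -/
def IsIso (p : GraphHom A B) : Prop := Function.Bijective p.v ∧ Function.Bijective p.e

/-- The restriction of the edge map to the edges emanating from `q`. -/
def outMap (p : GraphHom A B) (q : A.V) :
    {e : A.E // A.s e = q} → {e' : B.E // B.s e' = p.v q} :=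
  fun e => ⟨p.e e.1, by rw [p.s_eq, e.2]⟩

lemma isPath_map (p : GraphHom A B) {l : List A.E} (h : A.IsPath l) :
    B.IsPath (l.map p.e) := by
  rw [RGraph.IsPath]
  exact (List.isChain_map p.e).mpr (List.IsChain.imp (fun a b hab => by rw [p.t_eq, p.s_eq, hab]) h)

lemma pathFrom_map (p : GraphHom A B) {q : A.V} {l : List A.E} (h : A.PathFrom q l) :
    B.PathFrom (p.v q) (l.map p.e) := by
  refine ⟨p.isPath_map h.1, ?_⟩
  intro f hf
  cases l with
  | nil => simp at hf
  | cons a l =>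
    simp at hf
    subst hf
    rw [p.s_eq, h.2 a (by simp)]

lemma pathTarget_map (p : GraphHom A B) (q : A.V) (l : List A.E) :
    B.pathTarget (p.v q) (l.map p.e) = p.v (A.pathTarget q l) := by
  induction l generalizing q with
  | nil => rfl
  | cons a l ih =>
    show B.pathTarget (B.t (p.e a)) (l.map p.e) = _
    rw [p.t_eq]
    exact ih (A.t a)

lemma reach_map (p : GraphHom A B) {q w : A.V} (h : A.Reach q w) :
    B.Reach (p.v q) (p.v w) := by
  obtain ⟨l, hl, ht⟩ := h
  exact ⟨l.map p.e, p.pathFrom_map hl, by rw [p.pathTarget_map, ht]⟩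

end GraphHom

/-- Two graphs are isomorphic. -/
def RGraph.Iso (A B : RGraph) : Prop := ∃ p : GraphHom A B, p.IsIso

/-- The universal covering morphism from the universal covering tree of `A` to `A`. -/
def RGraph.uCover (A : RGraph) : GraphHom A.cover A where
  v := fun l => A.pathTarget A.root l.1
  e := fun x => x.1.2
  root_eq := rfl
  s_eq := fun x => x.2
  t_eq := fun x => by
    show A.t x.1.2 = A.pathTarget A.root (x.1.1.1 ++ [x.1.2])
    simp

/-- The morphism induced between universal covering trees by a morphism of graphs. -/
def GraphHom.coverMap {A B : RGraph} (p : GraphHom A B) : GraphHom A.cover B.cover where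
  v := fun l => ⟨l.1.map p.e, by have := p.pathFrom_map l.2; rwa [p.root_eq] at this⟩
  e := fun x =>
    ⟨(⟨x.1.1.1.map p.e, by have := p.pathFrom_map x.1.1.2; rwa [p.root_eq] at this⟩,
      p.e x.1.2), by
        show B.s (p.e x.1.2) = B.pathTarget B.root (x.1.1.1.map p.e)
        rw [p.s_eq, x.2, ← p.root_eq, p.pathTarget_map]⟩
  root_eq := Subtype.ext rfl
  s_eq := fun _ => rfl
  t_eq := fun x => by
    apply Subtype.ext
    simp [RGraph.cover]

/-- `A` is a covering quotient of `T`. -/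
def IsCovQuotient (T A : RGraph) : Prop := ∃ p : GraphHom T A, p.IsCovering

/-- `A` is a minimal covering quotient of `T`: a covering quotient with the minimal
number of vertices among all covering quotients of `T`. -/
def IsMinCovQuotient (T A : RGraph) : Prop :=
  IsCovQuotient T A ∧
    ∀ B : RGraph, IsCovQuotient T B → Cardinal.mk A.V ≤ Cardinal.mk B.V

/-- `T` has finitely many cone types. -/
def FinManyCones (T : RGraph) : Prop :=
  ∃ S : Set T.V, S.Finite ∧ ∀ v : T.V, ∃ w ∈ S, RGraph.Iso (T.subgraph v) (T.subgraph w)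

/-- A self-similar tree: a locally finite tree with finitely many cone types. -/
def SelfSimilarTree (T : RGraph) : Prop := T.IsTree ∧ T.LocallyFinite ∧ FinManyCones T

namespace RGraph

/-- The automorphism group of a graph, realized as the group of root-preserving,
adjacency-preserving permutations of the vertex set (for trees this is the same as the
automorphism group in the sense of graph morphisms, since in a tree an edge is determined
by its endpoints). -/
def autGroup (T : RGraph) : Subgroup (Equiv.Perm T.V) where
  carrier := {g | g T.root = T.root ∧ ∀ v w, T.Adj v w ↔ T.Adj (g v) (g w)}
  one_mem' := ⟨rfl, fun _ _ => Iff.rfl⟩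
  mul_mem' := by
    rintro a b ⟨ha1, ha2⟩ ⟨hb1, hb2⟩
    refine ⟨?_, fun v w => ?_⟩
    · show a (b T.root) = T.root
      rw [hb1, ha1]
    · exact (hb2 v w).trans (ha2 (b v) (b w))
  inv_mem' := by
    rintro a ⟨ha1, ha2⟩
    refine ⟨?_, fun v w => ?_⟩
    · show a.symm T.root = T.root
      rw [Equiv.symm_apply_eq]
      exact ha1.symm
    · have h := ha2 (a⁻¹ v) (a⁻¹ w)
      simpa using h.symm

/-- The subgroup of permutations of the vertices fixing every vertex outside
of the cone at `v`. -/
def fixOutside (T : RGraph) (v : T.V) : Subgroup (Equiv.Perm T.V) where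
  carrier := {g | ∀ w, ¬ T.Reach v w → g w = w}
  one_mem' := fun _ _ => rfl
  mul_mem' := by
    intro a b ha hb w hw
    show a (b w) = w
    rw [hb w hw, ha w hw]
  inv_mem' := by
    intro a ha w hw
    show a.symm w = w
    rw [Equiv.symm_apply_eq]
    exact (ha w hw).symm

/-- The rigid stabilizer of the vertex `v`: automorphisms fixing every vertex
outside the subtree spanned by `v` and its descendants. -/
def rist (T : RGraph) (v : T.V) : Subgroup (Equiv.Perm T.V) :=
  T.autGroup ⊓ T.fixOutside v

/-- The set of vertices at distance `n` from the root. -/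
def level (T : RGraph) (n : ℕ) : Set T.V :=
  {v | ∃ l : List T.E, T.PathFrom T.root l ∧ T.pathTarget T.root l = v ∧ l.length = n}

/-- The `n`-th rigid level stabilizer: the subgroup generated by the rigid stabilizers
of the vertices at distance `n` from the root. -/
def ristLevel (T : RGraph) (n : ℕ) : Subgroup (Equiv.Perm T.V) :=
  ⨆ v ∈ T.level n, T.rist v

/-- The `n`-th rigid level stabilizer, as a subgroup of the automorphism group. -/
def ristIn (T : RGraph) (n : ℕ) : Subgroup ↥T.autGroup :=
  (T.ristLevel n).comap T.autGroup.subtype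

end RGraph

/-- A recurrent double edge: a pair of distinct parallel edges such that there is an
oriented loop which contains one of them, or from which their common source can be
reached. -/
def HasRecDoubleEdge (A : RGraph) : Prop :=
  ∃ e₁ e₂ : A.E, e₁ ≠ e₂ ∧ A.s e₁ = A.s e₂ ∧ A.t e₁ = A.t e₂ ∧
    ((∃ (q : A.V) (l : List A.E),
        A.PathFrom q l ∧ l ≠ [] ∧ A.pathTarget q l = q ∧ (e₁ ∈ l ∨ e₂ ∈ l)) ∨
     (∃ (q : A.V) (l : List A.E),
        A.PathFrom q l ∧ l ≠ [] ∧ A.pathTarget q l = q ∧ A.Reach q (A.s e₁)))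

/-- A deterministic finite automaton over the alphabet `A`, with a partial transition
function, a single initial state, and all states accepting. -/
structure PDFA (A : Type) where
  Q : Type
  finQ : Finite Q
  neQ : Nonempty Q
  δ : Q → A → Option Q
  init : Q

namespace PDFA

variable {A : Type} (M : PDFA A)

/-- Running the automaton from state `q` on a word; `none` if it gets stuck. -/
def run : M.Q → List A → Option M.Q
  | q, [] => some q
  | q, a :: w => (M.δ q a).bind fun q' => run q' w

/-- The regular language accepted by `M`. -/
def Lang : Set (List A) := {w | (M.run M.init w).isSome}

lemma run_append (q : M.Q) (u w : List A) :
    M.run q (u ++ w) = (M.run q u).bind fun q' => M.run q' w := by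
  induction u generalizing q with
  | nil => simp [run]
  | cons a u ih =>
    simp only [List.cons_append, run]
    cases M.δ q a with
    | none => simp
    | some q' => simp [ih]

lemma isSome_of_append {q : M.Q} {u w : List A}
    (h : (M.run q (u ++ w)).isSome) : (M.run q u).isSome := by
  rw [run_append] at h
  cases hu : M.run q u with
  | none => rw [hu] at h; simp at h
  | some q' => simp

/-- The path language tree of `M`: the tree whose vertices are the words of the
language of `M`, with an edge from `w` to `w ++ [a]` whenever both belong to the
language. -/
def pathTree : RGraph where
  V := {w : List A // (M.run M.init w).isSome}
  E := {x : List A × A // (M.run M.init (x.1 ++ [x.2])).isSome}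
  s := fun x => ⟨x.1.1, M.isSome_of_append x.2⟩
  t := fun x => ⟨x.1.1 ++ [x.1.2], x.2⟩
  root := ⟨[], by simp [run]⟩

/-- The underlying rooted directed multigraph of the automaton `M`. -/
def underlying : RGraph where
  V := M.Q
  E := {x : M.Q × A // (M.δ x.1 x.2).isSome}
  s := fun x => x.1.1
  t := fun x => (M.δ x.1.1 x.1.2).get x.2
  root := M.init

/-- `M` is geometrically minimal: it has the minimal number of states among all DFAs
(over arbitrary finite nonempty alphabets) whose path language trees are isomorphic,
as unlabelled rooted trees, to the path language tree of `M`. -/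
def GeomMinimal : Prop :=
  ∀ (B : Type), Finite B → Nonempty B → ∀ N : PDFA B,
    RGraph.Iso M.pathTree N.pathTree → Nat.card M.Q ≤ Nat.card N.Q

/-- The state reached after reading the word `w` of the language. -/
def qstate (w : List A) (h : (M.run M.init w).isSome) : M.Q :=
  (M.run M.init w).get h

/-- The group of admissible permutations at the state `q`: permutations `τ` of the
alphabet fixing the letters outside `Σ(q)` and satisfying `δ(q, τ a) = δ(q, a)`. -/
def SymQ (q : M.Q) : Subgroup (Equiv.Perm A) where
  carrier := {τ | ∀ a, M.δ q (τ a) = M.δ q a ∧ (M.δ q a = none → τ a = a)}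
  one_mem' := fun _ => ⟨rfl, fun _ => rfl⟩
  mul_mem' := by
    intro τ₁ τ₂ h1 h2 a
    constructor
    · show M.δ q (τ₁ (τ₂ a)) = M.δ q a
      rw [(h1 (τ₂ a)).1, (h2 a).1]
    · intro hn
      show τ₁ (τ₂ a) = a
      rw [(h2 a).2 hn, (h1 a).2 hn]
  inv_mem' := by
    intro τ h a
    have h1 := (h (τ.symm a)).1
    rw [Equiv.apply_symm_apply] at h1
    constructor
    · show M.δ q (τ.symm a) = M.δ q a
      exact h1.symm
    · intro hn
      have h2 := (h (τ.symm a)).2 (h1.symm.trans hn)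
      rw [Equiv.apply_symm_apply] at h2
      show τ.symm a = a
      exact h2.symm

end PDFA

/-- Extending a portrait to a map on words (the first argument is the accumulated
prefix): the `i`-th letter of the image word is the image of the `i`-th letter under
the local injection at the prefix of length `i - 1`. -/
def portraitExtend {A : Type} (σ : List A → A → A) : List A → List A → List A
  | _, [] => []
  | pre, a :: w => σ pre a :: portraitExtend σ (pre ++ [a]) w


section Stmt8Aux

namespace S8

open RGraph Function

/-! ### Basic path lemmas -/

lemma pathFrom_cons {A : RGraph} {q : A.V} {e : A.E} {l : List A.E} :
    A.PathFrom q (e :: l) ↔ A.s e = q ∧ A.PathFrom (A.t e) l := by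
  constructor
  · rintro ⟨h1, h2⟩
    have h1' := List.isChain_cons.mp h1
    exact ⟨h2 e rfl, h1'.2, fun f hf => (h1'.1 f hf).symm⟩
  · rintro ⟨hs, h1, h2⟩
    refine ⟨List.isChain_cons.mpr ⟨fun b hb => (h2 b hb).symm, h1⟩, ?_⟩
    intro f hf
    simp only [List.head?_cons, Option.mem_def, Option.some.injEq] at hf
    subst hf; exact hs

lemma pathFrom_append {A : RGraph} {q : A.V} {l₁ l₂ : List A.E} :
    A.PathFrom q (l₁ ++ l₂) ↔ A.PathFrom q l₁ ∧ A.PathFrom (A.pathTarget q l₁) l₂ := by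
  induction l₁ generalizing q with
  | nil =>
    simp only [List.nil_append, RGraph.pathTarget_nil]
    exact ⟨fun h => ⟨A.pathFrom_nil q, h⟩, fun h => h.2⟩
  | cons e l ih =>
    simp only [List.cons_append, pathFrom_cons, ih, RGraph.pathTarget_cons, and_assoc]

lemma reach_trans {A : RGraph} {q w u : A.V} (h1 : A.Reach q w) (h2 : A.Reach w u) :
    A.Reach q u := by
  obtain ⟨l1, hl1, ht1⟩ := h1
  obtain ⟨l2, hl2, ht2⟩ := h2
  exact ⟨l1 ++ l2, pathFrom_append.mpr ⟨hl1, by rw [ht1]; exact hl2⟩,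
    by rw [RGraph.pathTarget_append, ht1, ht2]⟩

lemma tree_path_unique {T : RGraph} (hT : T.IsTree) {q : T.V} {l₁ l₂ : List T.E}
    (h₁ : T.PathFrom q l₁) (h₂ : T.PathFrom q l₂)
    (ht : T.pathTarget q l₁ = T.pathTarget q l₂) : l₁ = l₂ := by
  obtain ⟨⟨l₀, hl₀⟩, hq⟩ := hT.2 q
  simp only at hq
  have e1 : T.PathFrom T.root (l₀ ++ l₁) := pathFrom_append.mpr ⟨hl₀, by rw [hq]; exact h₁⟩
  have e2 : T.PathFrom T.root (l₀ ++ l₂) := pathFrom_append.mpr ⟨hl₀, by rw [hq]; exact h₂⟩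
  have key : (⟨l₀ ++ l₁, e1⟩ : {l : List T.E // T.PathFrom T.root l}) = ⟨l₀ ++ l₂, e2⟩ := by
    apply hT.1
    simp only [RGraph.pathTarget_append, hq, ht]
  exact List.append_cancel_left (congrArg Subtype.val key)

/-! ### Hom combinators -/

def GHid (A : RGraph) : GraphHom A A :=
  ⟨id, id, rfl, fun _ => rfl, fun _ => rfl⟩

def GHcomp {A B C : RGraph} (f : GraphHom A B) (g : GraphHom B C) : GraphHom A C where
  v := fun x => g.v (f.v x)
  e := fun x => g.e (f.e x)
  root_eq := by show g.v (f.v A.root) = C.root; rw [f.root_eq, g.root_eq]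
  s_eq := fun x => by show C.s (g.e (f.e x)) = g.v (f.v (A.s x)); rw [g.s_eq, f.s_eq]
  t_eq := fun x => by show C.t (g.e (f.e x)) = g.v (f.v (A.t x)); rw [g.t_eq, f.t_eq]

noncomputable def GHinv {A B : RGraph} (f : GraphHom A B) (hf : f.IsIso) : GraphHom B A where
  v := (Equiv.ofBijective f.v hf.1).symm
  e := (Equiv.ofBijective f.e hf.2).symm
  root_eq := by
    rw [Equiv.symm_apply_eq]
    exact f.root_eq.symm
  s_eq := fun x => by
    apply hf.1.1
    have h1 : f.v (A.s ((Equiv.ofBijective f.e hf.2).symm x)) =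
        B.s (f.e ((Equiv.ofBijective f.e hf.2).symm x)) := (f.s_eq _).symm
    rw [h1]
    have h2 : f.e ((Equiv.ofBijective f.e hf.2).symm x) = x :=
      (Equiv.ofBijective f.e hf.2).apply_symm_apply x
    rw [h2]
    have h3 : f.v ((Equiv.ofBijective f.v hf.1).symm (B.s x)) = B.s x :=
      (Equiv.ofBijective f.v hf.1).apply_symm_apply (B.s x)
    rw [h3]
  t_eq := fun x => by
    apply hf.1.1
    have h1 : f.v (A.t ((Equiv.ofBijective f.e hf.2).symm x)) =
        B.t (f.e ((Equiv.ofBijective f.e hf.2).symm x)) := (f.t_eq _).symm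
    rw [h1]
    have h2 : f.e ((Equiv.ofBijective f.e hf.2).symm x) = x :=
      (Equiv.ofBijective f.e hf.2).apply_symm_apply x
    rw [h2]
    have h3 : f.v ((Equiv.ofBijective f.v hf.1).symm (B.t x)) = B.t x :=
      (Equiv.ofBijective f.v hf.1).apply_symm_apply (B.t x)
    rw [h3]

lemma GHinv_isIso {A B : RGraph} (f : GraphHom A B) (hf : f.IsIso) : (GHinv f hf).IsIso :=
  ⟨(Equiv.ofBijective f.v hf.1).symm.bijective, (Equiv.ofBijective f.e hf.2).symm.bijective⟩

lemma GHinv_v_right {A B : RGraph} (f : GraphHom A B) (hf : f.IsIso) (b : B.V) :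
    f.v ((GHinv f hf).v b) = b := (Equiv.ofBijective f.v hf.1).apply_symm_apply b

lemma GHinv_e_right {A B : RGraph} (f : GraphHom A B) (hf : f.IsIso) (b : B.E) :
    f.e ((GHinv f hf).e b) = b := (Equiv.ofBijective f.e hf.2).apply_symm_apply b

lemma iso_refl (A : RGraph) : RGraph.Iso A A :=
  ⟨GHid A, Function.bijective_id, Function.bijective_id⟩

lemma iso_symm {A B : RGraph} (h : RGraph.Iso A B) : RGraph.Iso B A := by
  obtain ⟨f, hf⟩ := h
  exact ⟨GHinv f hf, GHinv_isIso f hf⟩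

lemma iso_trans {A B C : RGraph} (h1 : RGraph.Iso A B) (h2 : RGraph.Iso B C) : RGraph.Iso A C := by
  obtain ⟨f, hf⟩ := h1
  obtain ⟨g, hg⟩ := h2
  exact ⟨GHcomp f g, hg.1.comp hf.1, hg.2.comp hf.2⟩

/-! ### Covering toolkit -/

noncomputable def lift {A B : RGraph} (p : GraphHom A B) (hp : p.UPLP) (q : A.V)
    (l' : List B.E) (h : B.PathFrom (p.v q) l') : List A.E :=
  (hp q l' h).exists.choose

lemma lift_spec {A B : RGraph} (p : GraphHom A B) (hp : p.UPLP) (q : A.V)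
    (l' : List B.E) (h : B.PathFrom (p.v q) l') :
    A.PathFrom q (lift p hp q l' h) ∧ (lift p hp q l' h).map p.e = l' :=
  (hp q l' h).exists.choose_spec

lemma lift_unique {A B : RGraph} (p : GraphHom A B) (hp : p.UPLP) {q : A.V}
    {l' : List B.E} (h : B.PathFrom (p.v q) l') {l : List A.E}
    (hl : A.PathFrom q l) (hm : l.map p.e = l') : l = lift p hp q l' h :=
  (hp q l' h).unique ⟨hl, hm⟩ (lift_spec p hp q l' h)

lemma lift_nil {A B : RGraph} (p : GraphHom A B) (hp : p.UPLP) (q : A.V)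
    (h : B.PathFrom (p.v q) []) : lift p hp q [] h = [] :=
  (lift_unique p hp h (A.pathFrom_nil q) rfl).symm

lemma single_pathFrom {A : RGraph} {q : A.V} {e : A.E} (h : A.s e = q) :
    A.PathFrom q [e] := pathFrom_cons.mpr ⟨h, A.pathFrom_nil _⟩

lemma outMap_bijective {A B : RGraph} (p : GraphHom A B) (hp : p.UPLP) (q : A.V) :
    Function.Bijective (p.outMap q) := by
  constructor
  · rintro ⟨e₁, he₁⟩ ⟨e₂, he₂⟩ h
    have hpe : p.e e₁ = p.e e₂ := congrArg Subtype.val h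
    have hpf : B.PathFrom (p.v q) [p.e e₁] :=
      single_pathFrom (by rw [p.s_eq, he₁])
    have h1 : [e₁] = lift p hp q [p.e e₁] hpf :=
      lift_unique p hp hpf (single_pathFrom he₁) rfl
    have h2 : [e₂] = lift p hp q [p.e e₁] hpf :=
      lift_unique p hp hpf (single_pathFrom he₂) (by rw [List.map_singleton, hpe])
    have : [e₁] = [e₂] := h1.trans h2.symm
    exact Subtype.ext (List.singleton_injective this)
  · rintro ⟨f, hf⟩
    have hpf : B.PathFrom (p.v q) [f] := single_pathFrom hf
    obtain ⟨hl, hm⟩ := lift_spec p hp q [f] hpf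
    match hll : lift p hp q [f] hpf with
    | [] => rw [hll] at hm; simp at hm
    | e :: rest =>
      rw [hll] at hm hl
      simp only [List.map_cons, List.cons.injEq] at hm
      have hrest : rest = [] := List.map_eq_nil_iff.mp hm.2
      subst hrest
      refine ⟨⟨e, (pathFrom_cons.mp hl).1⟩, Subtype.ext hm.1⟩

lemma uplp_of_outMap {A B : RGraph} (p : GraphHom A B)
    (h : ∀ q, Function.Bijective (p.outMap q)) : p.UPLP := by
  intro q l' hl'
  induction l' generalizing q with
  | nil =>
    refine ⟨[], ⟨A.pathFrom_nil q, rfl⟩, ?_⟩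
    rintro l ⟨_, hm⟩
    exact List.map_eq_nil_iff.mp hm
  | cons f l' ih =>
    obtain ⟨hf, hrest⟩ := pathFrom_cons.mp hl'
    obtain ⟨⟨e, he⟩, hee⟩ := (h q).2 ⟨f, hf⟩
    have hpe : p.e e = f := congrArg Subtype.val hee
    have hnext : B.PathFrom (p.v (A.t e)) l' := by
      rw [← p.t_eq, hpe]; exact hrest
    obtain ⟨l, ⟨hl1, hl2⟩, hu⟩ := ih (A.t e) hnext
    refine ⟨e :: l, ⟨pathFrom_cons.mpr ⟨he, hl1⟩, by simp [hpe, hl2]⟩, ?_⟩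
    rintro m ⟨hm1, hm2⟩
    match m with
    | [] => simp at hm2
    | e₀ :: m' =>
      simp only [List.map_cons, List.cons.injEq] at hm2
      obtain ⟨hs₀, hm1'⟩ := pathFrom_cons.mp hm1
      have : (⟨e₀, hs₀⟩ : {x : A.E // A.s x = q}) = ⟨e, he⟩ :=
        (h q).1 (by apply Subtype.ext; show p.e e₀ = p.e e; rw [hm2.1, hpe])
      have he₀ : e₀ = e := congrArg Subtype.val this
      subst he₀
      have : m' = l := hu m' ⟨hm1', hm2.2⟩
      rw [this]

lemma outMap_inj_val {A B : RGraph} (p : GraphHom A B) {q : A.V}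
    (h : Function.Bijective (p.outMap q)) {e1 e2 : A.E}
    (h1 : A.s e1 = q) (h2 : A.s e2 = q) (he : p.e e1 = p.e e2) : e1 = e2 :=
  congrArg Subtype.val (h.1 (a₁ := ⟨e1, h1⟩) (a₂ := ⟨e2, h2⟩) (Subtype.ext he))

lemma outMap_surj_val {A B : RGraph} (p : GraphHom A B) {q : A.V}
    (h : Function.Bijective (p.outMap q)) {f : B.E} (hf : B.s f = p.v q) :
    ∃ e, A.s e = q ∧ p.e e = f := by
  obtain ⟨⟨e, he⟩, hee⟩ := h.2 ⟨f, hf⟩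
  exact ⟨e, he, congrArg Subtype.val hee⟩

lemma covering_comp {A B C : RGraph} (f : GraphHom A B) (g : GraphHom B C)
    (hf : f.IsCovering) (hg : g.IsCovering) : (GHcomp f g).IsCovering := by
  refine ⟨hg.1.comp hf.1, uplp_of_outMap _ fun q => ?_⟩
  have key : (GHcomp f g).outMap q = (g.outMap (f.v q)) ∘ (f.outMap q) := by
    funext x
    apply Subtype.ext
    rfl
  rw [key]
  exact (outMap_bijective g hg.2 (f.v q)).comp (outMap_bijective f hf.2 q)

lemma covering_of_iso {A B : RGraph} (f : GraphHom A B) (hf : f.IsIso) : f.IsCovering := by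
  refine ⟨hf.1.2, uplp_of_outMap _ fun q => ?_⟩
  constructor
  · rintro ⟨e1, h1⟩ ⟨e2, h2⟩ h
    exact Subtype.ext (hf.2.1 (congrArg Subtype.val h))
  · rintro ⟨f', hf'⟩
    obtain ⟨e, he⟩ := hf.2.2 f'
    have hs : A.s e = q := by
      apply hf.1.1
      rw [← f.s_eq, he, hf']
    exact ⟨⟨e, hs⟩, Subtype.ext he⟩

noncomputable def liftEdge {A B : RGraph} (p : GraphHom A B) (hp : p.UPLP) (q : A.V)
    (f : B.E) (h : B.s f = p.v q) : A.E :=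
  ((Equiv.ofBijective _ (outMap_bijective p hp q)).symm ⟨f, h⟩).val

lemma liftEdge_s {A B : RGraph} (p : GraphHom A B) (hp : p.UPLP) (q : A.V)
    (f : B.E) (h : B.s f = p.v q) : A.s (liftEdge p hp q f h) = q :=
  ((Equiv.ofBijective _ (outMap_bijective p hp q)).symm ⟨f, h⟩).2

lemma liftEdge_e {A B : RGraph} (p : GraphHom A B) (hp : p.UPLP) (q : A.V)
    (f : B.E) (h : B.s f = p.v q) : p.e (liftEdge p hp q f h) = f :=
  congrArg Subtype.val
    ((Equiv.ofBijective _ (outMap_bijective p hp q)).apply_symm_apply ⟨f, h⟩)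

lemma liftEdge_unique {A B : RGraph} (p : GraphHom A B) (hp : p.UPLP) {q : A.V}
    {f : B.E} (h : B.s f = p.v q) {e : A.E} (he : A.s e = q) (hpe : p.e e = f) :
    e = liftEdge p hp q f h :=
  outMap_inj_val p (outMap_bijective p hp q) he (liftEdge_s p hp q f h)
    (by rw [hpe, liftEdge_e])

lemma liftEdge_congr {A B : RGraph} (p : GraphHom A B) (hp : p.UPLP) {q1 q2 : A.V}
    (h12 : q1 = q2) (f : B.E) (h1 : B.s f = p.v q1) (h2 : B.s f = p.v q2) :
    liftEdge p hp q1 f h1 = liftEdge p hp q2 f h2 := by subst h12; rfl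

/-! ### Subgraph path lemmas -/

lemma sub_pathTarget {A : RGraph} {t : A.V} (v0 : (A.subgraph t).V)
    (L : List (A.subgraph t).E) :
    ((A.subgraph t).pathTarget v0 L).val = A.pathTarget v0.val (L.map Subtype.val) := by
  induction L generalizing v0 with
  | nil => rfl
  | cons e L ih => exact ih ((A.subgraph t).t e)

lemma sub_pathFrom_down {A : RGraph} {t : A.V} {v0 : (A.subgraph t).V}
    {L : List (A.subgraph t).E} (h : (A.subgraph t).PathFrom v0 L) :
    A.PathFrom v0.val (L.map Subtype.val) := by
  induction L generalizing v0 with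
  | nil => exact A.pathFrom_nil _
  | cons e L ih =>
    rw [pathFrom_cons] at h
    show A.PathFrom v0.val (e.val :: L.map Subtype.val); rw [pathFrom_cons]
    exact ⟨congrArg Subtype.val h.1, ih h.2⟩

lemma sub_pathFrom_up {A : RGraph} {t : A.V} :
    ∀ (l : List A.E) (w : A.V) (hw : A.Reach t w), A.PathFrom w l →
      ∃ L : List (A.subgraph t).E, L.map Subtype.val = l ∧
        (A.subgraph t).PathFrom ⟨w, hw⟩ L := by
  intro l
  induction l with
  | nil => exact fun w hw _ => ⟨[], rfl, (A.subgraph t).pathFrom_nil _⟩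
  | cons e l ih =>
    intro w hw h
    rw [pathFrom_cons] at h
    have hse : A.Reach t (A.s e) := by rw [h.1]; exact hw
    have hte : A.Reach t (A.t e) := RGraph.reach_target hse
    obtain ⟨L, hL1, hL2⟩ := ih (A.t e) hte h.2
    exact ⟨⟨e, hse⟩ :: L, congrArg (List.cons e) hL1, pathFrom_cons.mpr ⟨Subtype.ext h.1, hL2⟩⟩

lemma reach_sub {A : RGraph} {t w u : A.V} (hw : A.Reach t w) (hu : A.Reach t u) :
    (A.subgraph t).Reach ⟨w, hw⟩ ⟨u, hu⟩ ↔ A.Reach w u := by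
  constructor
  · rintro ⟨L, hL, hT⟩
    exact ⟨L.map Subtype.val, sub_pathFrom_down hL,
      (sub_pathTarget ⟨w, hw⟩ L).symm.trans (congrArg Subtype.val hT)⟩
  · rintro ⟨l, hl, hT⟩
    obtain ⟨L, h1, h2⟩ := sub_pathFrom_up l w hw hl
    exact ⟨L, h2, Subtype.ext ((sub_pathTarget ⟨w, hw⟩ L).trans (by rw [h1, hT]))⟩

lemma iso_sub_sub {A : RGraph} {t w : A.V} (hw : A.Reach t w) :
    RGraph.Iso ((A.subgraph t).subgraph ⟨w, hw⟩) (A.subgraph w) := by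
  refine ⟨⟨fun x => ⟨x.val.val, (reach_sub hw x.val.2).mp x.2⟩,
      fun E => ⟨E.val.val, (reach_sub hw E.val.2).mp E.2⟩,
      Subtype.ext rfl, fun E => Subtype.ext rfl, fun E => Subtype.ext rfl⟩, ?_, ?_⟩
  · constructor
    · intro x y hxy
      have h'' := congrArg Subtype.val hxy
      have h' : x.val.val = y.val.val := h''
      exact Subtype.ext (Subtype.ext h')
    · rintro ⟨u, hu⟩
      exact ⟨⟨⟨u, reach_trans hw hu⟩, (reach_sub hw (reach_trans hw hu)).mpr hu⟩,
        Subtype.ext rfl⟩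
  · constructor
    · intro x y hxy
      have h'' := congrArg Subtype.val hxy
      have h' : x.val.val = y.val.val := h''
      exact Subtype.ext (Subtype.ext h')
    · rintro ⟨e, he⟩
      exact ⟨⟨⟨e, reach_trans hw he⟩, (reach_sub hw (reach_trans hw he)).mpr he⟩,
        Subtype.ext rfl⟩

lemma iso_sub_map {A B : RGraph} (f : GraphHom A B) (hf : f.IsIso) (x : A.V) :
    RGraph.Iso (A.subgraph x) (B.subgraph (f.v x)) := by
  refine ⟨⟨fun u => ⟨f.v u.val, f.reach_map u.2⟩,
      fun e => ⟨f.e e.val, by rw [f.s_eq]; exact f.reach_map e.2⟩,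
      Subtype.ext rfl, fun e => Subtype.ext (f.s_eq _), fun e => Subtype.ext (f.t_eq _)⟩,
      ?_, ?_⟩
  · constructor
    · intro u w huw
      exact Subtype.ext (hf.1.1 (congrArg Subtype.val huw))
    · rintro ⟨u', hu'⟩
      refine ⟨⟨(GHinv f hf).v u', ?_⟩, Subtype.ext (GHinv_v_right f hf u')⟩
      have := (GHinv f hf).reach_map hu'
      have hx : (GHinv f hf).v (f.v x) = x := by
        apply hf.1.1; rw [GHinv_v_right]
      rwa [hx] at this
  · constructor
    · intro u w huw
      exact Subtype.ext (hf.2.1 (congrArg Subtype.val huw))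
    · rintro ⟨e', he'⟩
      refine ⟨⟨(GHinv f hf).e e', ?_⟩, Subtype.ext (GHinv_e_right f hf e')⟩
      have h1 : A.s ((GHinv f hf).e e') = (GHinv f hf).v (B.s e') := (GHinv f hf).s_eq e'
      have := (GHinv f hf).reach_map he'
      have hx : (GHinv f hf).v (f.v x) = x := by
        apply hf.1.1; rw [GHinv_v_right]
      rw [hx] at this
      rwa [h1]

lemma iso_cone_of_sub_iso {A : RGraph} {t u : A.V}
    (f : GraphHom (A.subgraph t) (A.subgraph u)) (hf : f.IsIso)
    (w : (A.subgraph t).V) :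
    RGraph.Iso (A.subgraph w.val) (A.subgraph (f.v w).val) := by
  have h1 : RGraph.Iso ((A.subgraph t).subgraph ⟨w.val, w.2⟩) (A.subgraph w.val) :=
    iso_sub_sub w.2
  have h2 : RGraph.Iso ((A.subgraph t).subgraph w) ((A.subgraph u).subgraph (f.v w)) :=
    iso_sub_map f hf w
  have h3 : RGraph.Iso ((A.subgraph u).subgraph ⟨(f.v w).val, (f.v w).2⟩)
      (A.subgraph (f.v w).val) := iso_sub_sub (f.v w).2
  exact iso_trans (iso_symm h1) (iso_trans h2 h3)

/-! ### The path graph and cone rigidity -/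

def pathGraph (B : RGraph) (a : B.V) : RGraph where
  V := {l : List B.E // B.PathFrom a l}
  E := {x : List B.E × B.E // B.PathFrom a x.1 ∧ B.s x.2 = B.pathTarget a x.1}
  s := fun x => ⟨x.1.1, x.2.1⟩
  t := fun x => ⟨x.1.1 ++ [x.1.2], RGraph.pathFrom_append_single x.2.1 x.2.2⟩
  root := ⟨[], B.pathFrom_nil a⟩

lemma iso_pathGraph_sub {T B : RGraph} (hT : T.IsTree) (p : GraphHom T B) (hp : p.UPLP)
    (t : T.V) : RGraph.Iso (pathGraph B (p.v t)) (T.subgraph t) := by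
  have hsf : ∀ x : (pathGraph B (p.v t)).E,
      B.s x.1.2 = p.v (T.pathTarget t (lift p hp t x.1.1 x.2.1)) := by
    intro x
    rw [← GraphHom.pathTarget_map, (lift_spec p hp t x.1.1 x.2.1).2]
    exact x.2.2
  have hlift_app : ∀ x : (pathGraph B (p.v t)).E,
      ∀ h' : B.PathFrom (p.v t) (x.1.1 ++ [x.1.2]),
      lift p hp t (x.1.1 ++ [x.1.2]) h' =
        lift p hp t x.1.1 x.2.1 ++ [liftEdge p hp _ x.1.2 (hsf x)] := by
    intro x h'
    refine (lift_unique p hp h' ?_ ?_).symm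
    · exact RGraph.pathFrom_append_single (lift_spec p hp t x.1.1 x.2.1).1
        (liftEdge_s p hp (T.pathTarget t (lift p hp t x.1.1 x.2.1)) x.1.2 (hsf x))
    · rw [List.map_append, (lift_spec p hp t x.1.1 x.2.1).2, List.map_singleton,
        liftEdge_e]
  refine ⟨⟨fun l => ⟨T.pathTarget t (lift p hp t l.1 l.2),
      ⟨lift p hp t l.1 l.2, (lift_spec p hp t l.1 l.2).1, rfl⟩⟩,
      fun x => ⟨liftEdge p hp (T.pathTarget t (lift p hp t x.1.1 x.2.1)) x.1.2 (hsf x),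
        by rw [liftEdge_s]
           exact ⟨lift p hp t x.1.1 x.2.1, (lift_spec p hp t x.1.1 x.2.1).1, rfl⟩⟩,
      ?_, ?_, ?_⟩, ?_, ?_⟩
  · apply Subtype.ext
    show T.pathTarget t (lift p hp t [] ((pathGraph B (p.v t)).root).2) = t
    exact congrArg (T.pathTarget t) (lift_nil p hp t _)
  · intro x
    apply Subtype.ext
    exact liftEdge_s p hp _ _ _
  · intro x
    apply Subtype.ext
    show T.t (liftEdge p hp _ x.1.2 (hsf x)) =
      T.pathTarget t (lift p hp t (x.1.1 ++ [x.1.2]) _)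
    exact ((congrArg (T.pathTarget t) (hlift_app x _)).trans
      (RGraph.pathTarget_append_single _ _ _ _)).symm
  · constructor
    · intro x y hxy
      have heq : T.pathTarget t (lift p hp t x.1 x.2) =
          T.pathTarget t (lift p hp t y.1 y.2) := congrArg Subtype.val hxy
      have h1 : lift p hp t x.1 x.2 = lift p hp t y.1 y.2 :=
        tree_path_unique hT (lift_spec p hp t x.1 x.2).1 (lift_spec p hp t y.1 y.2).1 heq
      apply Subtype.ext
      rw [← (lift_spec p hp t x.1 x.2).2, ← (lift_spec p hp t y.1 y.2).2, h1]
    · rintro ⟨w, ⟨l, hl, htl⟩⟩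
      have hpm : B.PathFrom (p.v t) (l.map p.e) := p.pathFrom_map hl
      refine ⟨⟨l.map p.e, hpm⟩, Subtype.ext ?_⟩
      show T.pathTarget t (lift p hp t (l.map p.e) hpm) = w
      rw [← lift_unique p hp hpm hl rfl, htl]
  · constructor
    · intro x y hxy
      have hval : liftEdge p hp _ x.1.2 (hsf x) = liftEdge p hp _ y.1.2 (hsf y) :=
        congrArg Subtype.val hxy
      have hx2 : p.e (liftEdge p hp _ x.1.2 (hsf x)) = x.1.2 := liftEdge_e p hp _ _ _
      have hy2 : p.e (liftEdge p hp _ y.1.2 (hsf y)) = y.1.2 := liftEdge_e p hp _ _ _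
      have hxs : T.s (liftEdge p hp _ x.1.2 (hsf x)) =
          T.pathTarget t (lift p hp t x.1.1 x.2.1) := liftEdge_s p hp _ _ _
      have hys : T.s (liftEdge p hp _ y.1.2 (hsf y)) =
          T.pathTarget t (lift p hp t y.1.1 y.2.1) := liftEdge_s p hp _ _ _
      have htar : T.pathTarget t (lift p hp t x.1.1 x.2.1) =
          T.pathTarget t (lift p hp t y.1.1 y.2.1) := by
        rw [← hxs, ← hys, hval]
      have h1 : lift p hp t x.1.1 x.2.1 = lift p hp t y.1.1 y.2.1 :=
        tree_path_unique hT (lift_spec p hp t x.1.1 x.2.1).1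
          (lift_spec p hp t y.1.1 y.2.1).1 htar
      have hl1 : x.1.1 = y.1.1 := by
        rw [← (lift_spec p hp t x.1.1 x.2.1).2, ← (lift_spec p hp t y.1.1 y.2.1).2, h1]
      have hl2 : x.1.2 = y.1.2 := by rw [← hx2, ← hy2, hval]
      apply Subtype.ext
      exact Prod.ext hl1 hl2
    · rintro ⟨E, hE⟩
      obtain ⟨l₀, hl₀, ht₀⟩ := hE
      have hpm : B.PathFrom (p.v t) (l₀.map p.e) := p.pathFrom_map hl₀
      have hx2 : B.s (p.e E) = B.pathTarget (p.v t) (l₀.map p.e) := by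
        rw [p.s_eq, GraphHom.pathTarget_map, ht₀]
      refine ⟨⟨(l₀.map p.e, p.e E), hpm, hx2⟩, Subtype.ext ?_⟩
      show liftEdge p hp (T.pathTarget t (lift p hp t (l₀.map p.e) _)) (p.e E) _ = E
      refine (liftEdge_unique p hp _ ?_ rfl).symm
      rw [← lift_unique p hp hpm hl₀ rfl, ht₀]

lemma cone_class_eq {T B : RGraph} (hT : T.IsTree) (p : GraphHom T B) (hp : p.UPLP)
    {t t' : T.V} (h : p.v t = p.v t') :
    RGraph.Iso (T.subgraph t) (T.subgraph t') := by
  have h1 := iso_pathGraph_sub hT p hp t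
  have h2 := iso_pathGraph_sub hT p hp t'
  rw [← h] at h2
  exact iso_trans (iso_symm h1) h2

/-! ### Cone graph -/

def coneSetoid (T : RGraph) : Setoid T.V where
  r v w := RGraph.Iso (T.subgraph v) (T.subgraph w)
  iseqv := ⟨fun _ => iso_refl _, iso_symm, iso_trans⟩

def coneGraph (T : RGraph) : RGraph where
  V := Quotient (coneSetoid T)
  E := {e : T.E // (Quotient.mk (coneSetoid T) (T.s e)).out = T.s e}
  s := fun e => Quotient.mk _ (T.s e.val)
  t := fun e => Quotient.mk _ (T.t e.val)
  root := Quotient.mk _ T.root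

lemma coneQ_sound {T : RGraph} {v w : T.V}
    (h : RGraph.Iso (T.subgraph v) (T.subgraph w)) :
    Quotient.mk (coneSetoid T) v = Quotient.mk (coneSetoid T) w :=
  Quotient.sound h

noncomputable def coneIso (T : RGraph) (t : T.V) :
    GraphHom (T.subgraph t) (T.subgraph ((Quotient.mk (coneSetoid T) t).out)) := by
  have h : RGraph.Iso (T.subgraph ((Quotient.mk (coneSetoid T) t).out)) (T.subgraph t) :=
    Quotient.exact (Quotient.out_eq (Quotient.mk (coneSetoid T) t))
  exact (iso_symm h).choose

lemma coneIso_isIso (T : RGraph) (t : T.V) : (coneIso T t).IsIso := by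
  have h : RGraph.Iso (T.subgraph ((Quotient.mk (coneSetoid T) t).out)) (T.subgraph t) :=
    Quotient.exact (Quotient.out_eq (Quotient.mk (coneSetoid T) t))
  exact (iso_symm h).choose_spec

lemma coneIso_edge_s (T : RGraph) (e : T.E) :
    T.s (((coneIso T (T.s e)).e ⟨e, T.reach_self (T.s e)⟩).val) =
      (Quotient.mk (coneSetoid T) (T.s e)).out := by
  have h1 : (T.subgraph _).s ((coneIso T (T.s e)).e ⟨e, T.reach_self (T.s e)⟩) =
      (coneIso T (T.s e)).v ((T.subgraph (T.s e)).s ⟨e, T.reach_self (T.s e)⟩) :=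
    (coneIso T (T.s e)).s_eq _
  have h2 : (T.subgraph (T.s e)).s ⟨e, T.reach_self (T.s e)⟩ =
      (T.subgraph (T.s e)).root := Subtype.ext rfl
  have h3 := (coneIso T (T.s e)).root_eq
  have := congrArg Subtype.val (h1.trans (by rw [h2, h3]))
  exact this

noncomputable def coneHom (T : RGraph) : GraphHom T (coneGraph T) where
  v := Quotient.mk _
  e := fun e => ⟨((coneIso T (T.s e)).e ⟨e, T.reach_self (T.s e)⟩).val, by
    rw [coneIso_edge_s T e, Quotient.out_eq]⟩
  root_eq := rfl
  s_eq := fun e => by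
    show Quotient.mk _ (T.s _) = Quotient.mk _ (T.s e)
    rw [coneIso_edge_s T e, Quotient.out_eq]
  t_eq := fun e => by
    show Quotient.mk _ (T.t (((coneIso T (T.s e)).e ⟨e, T.reach_self (T.s e)⟩).val)) =
      Quotient.mk _ (T.t e)
    have h1 : (T.subgraph _).t ((coneIso T (T.s e)).e ⟨e, T.reach_self (T.s e)⟩) =
        (coneIso T (T.s e)).v ((T.subgraph (T.s e)).t ⟨e, T.reach_self (T.s e)⟩) :=
      (coneIso T (T.s e)).t_eq _
    have h2 : T.t (((coneIso T (T.s e)).e ⟨e, T.reach_self (T.s e)⟩).val) =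
        ((coneIso T (T.s e)).v ((T.subgraph (T.s e)).t ⟨e, T.reach_self (T.s e)⟩)).val :=
      congrArg Subtype.val h1
    rw [h2]
    apply (coneQ_sound _).symm
    exact iso_cone_of_sub_iso (coneIso T (T.s e)) (coneIso_isIso T (T.s e))
      ((T.subgraph (T.s e)).t ⟨e, T.reach_self (T.s e)⟩)

lemma coneHom_v (T : RGraph) (t : T.V) :
    (coneHom T).v t = Quotient.mk (coneSetoid T) t := rfl

lemma coneHom_outMap_bij (T : RGraph) (t : T.V) :
    Function.Bijective ((coneHom T).outMap t) := by
  have hFeq : ∀ (e : T.E) (he : T.s e = t) (hr : T.Reach t (T.s e)),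
      ((coneHom T).e e).val = ((coneIso T t).e ⟨e, hr⟩).val := by
    intro e he hr
    subst he
    rfl
  constructor
  · rintro ⟨e1, h1⟩ ⟨e2, h2⟩ h
    have hr1 : T.Reach t (T.s e1) := by rw [h1]; exact T.reach_self t
    have hr2 : T.Reach t (T.s e2) := by rw [h2]; exact T.reach_self t
    have hval : ((coneHom T).e e1).val = ((coneHom T).e e2).val :=
      congrArg Subtype.val (congrArg Subtype.val h)
    rw [hFeq e1 h1 hr1, hFeq e2 h2 hr2] at hval
    have heq : (⟨e1, hr1⟩ : (T.subgraph t).E) = ⟨e2, hr2⟩ :=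
      (coneIso_isIso T t).2.1 (Subtype.ext hval)
    have : e1 = e2 := congrArg Subtype.val heq
    exact Subtype.ext this
  · rintro ⟨⟨e', he'⟩, hse'⟩
    have hse'2 : Quotient.mk (coneSetoid T) (T.s e') = Quotient.mk (coneSetoid T) t := hse'
    have hsu : T.s e' = (Quotient.mk (coneSetoid T) t).out := by
      rw [← he']
      exact congrArg Quotient.out hse'2
    have hre' : T.Reach ((Quotient.mk (coneSetoid T) t).out) (T.s e') := by
      rw [hsu]; exact T.reach_self _
    obtain ⟨x, hx⟩ := (coneIso_isIso T t).2.2 ⟨e', hre'⟩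
    have hroot : (T.subgraph ((Quotient.mk (coneSetoid T) t).out)).s ⟨e', hre'⟩ =
        (T.subgraph ((Quotient.mk (coneSetoid T) t).out)).root := Subtype.ext hsu
    have hxs : (T.subgraph t).s x = (T.subgraph t).root := by
      apply (coneIso_isIso T t).1.1
      rw [← (coneIso T t).s_eq, hx, (coneIso T t).root_eq]
      exact hroot
    have hxe : T.s x.val = t := congrArg Subtype.val hxs
    have hxr : T.Reach t (T.s x.val) := by rw [hxe]; exact T.reach_self t
    refine ⟨⟨x.val, hxe⟩, ?_⟩
    apply Subtype.ext
    apply Subtype.ext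
    show ((coneHom T).e x.val).val = e'
    rw [hFeq x.val hxe hxr]
    have hxx : (⟨x.val, hxr⟩ : (T.subgraph t).E) = x := Subtype.ext rfl
    rw [hxx, hx]

lemma coneHom_covering (T : RGraph) : (coneHom T).IsCovering := by
  refine ⟨?_, uplp_of_outMap _ (coneHom_outMap_bij T)⟩
  intro c
  induction c using Quotient.ind with
  | _ t => exact ⟨t, rfl⟩

lemma coneGraph_finite (T : RGraph) (h : FinManyCones T) : Finite (coneGraph T).V := by
  obtain ⟨S, hS, hall⟩ := h
  have hsurj : Function.Surjective
      (fun s : S => Quotient.mk (coneSetoid T) s.val) := by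
    intro c
    induction c using Quotient.ind with
    | _ v =>
      obtain ⟨w, hw, hiso⟩ := hall v
      exact ⟨⟨w, hw⟩, (coneQ_sound hiso).symm⟩
  have : Finite S := hS.to_subtype
  exact Finite.of_surjective _ hsurj

/-! ### The quotient hom from any covering quotient to the cone graph -/

noncomputable def quotHom {T B : RGraph} (hT : T.IsTree) (π : GraphHom T B)
    (hπ : π.IsCovering) : GraphHom B (coneGraph T) where
  v := fun b => Quotient.mk _ (Function.surjInv hπ.1 b)
  e := fun f => (coneHom T).e (liftEdge π hπ.2 (Function.surjInv hπ.1 (B.s f)) f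
    (Function.surjInv_eq hπ.1 (B.s f)).symm)
  root_eq := by
    apply coneQ_sound
    apply cone_class_eq hT π hπ.2
    rw [Function.surjInv_eq hπ.1 B.root, π.root_eq]
  s_eq := fun f => by
    rw [(coneHom T).s_eq, liftEdge_s]
    rfl
  t_eq := fun f => by
    rw [(coneHom T).t_eq]
    apply coneQ_sound
    apply cone_class_eq hT π hπ.2
    rw [← π.t_eq, liftEdge_e, Function.surjInv_eq hπ.1 (B.t f)]

lemma quotHom_e_eq {T B : RGraph} (hT : T.IsTree) (π : GraphHom T B)
    (hπ : π.IsCovering) {b : B.V} {f : B.E} (hf : B.s f = b)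
    (h' : B.s f = π.v (Function.surjInv hπ.1 b)) :
    (quotHom hT π hπ).e f = (coneHom T).e (liftEdge π hπ.2 (Function.surjInv hπ.1 b) f h') := by
  show (coneHom T).e _ = (coneHom T).e _
  congr 1
  apply liftEdge_congr
  rw [hf]

lemma quotHom_covering {T B : RGraph} (hT : T.IsTree) (π : GraphHom T B)
    (hπ : π.IsCovering) : (quotHom hT π hπ).IsCovering := by
  constructor
  · intro c
    induction c using Quotient.ind with
    | _ t =>
      refine ⟨π.v t, ?_⟩
      apply coneQ_sound
      apply cone_class_eq hT π hπ.2
      rw [Function.surjInv_eq hπ.1]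
  · apply uplp_of_outMap
    intro b
    set q := Function.surjInv hπ.1 b with hq
    have hπq : π.v q = b := Function.surjInv_eq hπ.1 b
    constructor
    · rintro ⟨f1, h1⟩ ⟨f2, h2⟩ h
      have hval : (quotHom hT π hπ).e f1 = (quotHom hT π hπ).e f2 :=
        congrArg Subtype.val h
      rw [quotHom_e_eq hT π hπ h1 (by rw [h1, hπq]),
        quotHom_e_eq hT π hπ h2 (by rw [h2, hπq])] at hval
      have he := outMap_inj_val (coneHom T) (coneHom_outMap_bij T q)
        (liftEdge_s π hπ.2 q f1 _) (liftEdge_s π hπ.2 q f2 _) hval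
      have : f1 = f2 := by
        rw [← liftEdge_e π hπ.2 q f1 (by rw [h1, hπq]),
          ← liftEdge_e π hπ.2 q f2 (by rw [h2, hπq]), he]
      exact Subtype.ext this
    · rintro ⟨E', hE'⟩
      have hE'2 : (coneGraph T).s E' = (coneHom T).v q := hE'
      obtain ⟨e, hse, hce⟩ := outMap_surj_val (coneHom T) (coneHom_outMap_bij T q) hE'2
      have hbf : B.s (π.e e) = b := by rw [π.s_eq, hse, hπq]
      refine ⟨⟨π.e e, hbf⟩, ?_⟩
      apply Subtype.ext
      show (quotHom hT π hπ).e (π.e e) = E'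
      rw [quotHom_e_eq hT π hπ hbf (by rw [hbf, hπq])]
      rw [← liftEdge_unique π hπ.2 _ hse rfl]
      exact hce

end S8

end Stmt8Aux

/-- If `T` is a self-similar tree, `A` is a covering quotient of `T`
and `Ā` is a minimal covering quotient of `T`, then there exists a covering morphism
`p : A → Ā`. -/
theorem stmt8 (T : RGraph) (hT : SelfSimilarTree T) (A Abar : RGraph)
    (hA : IsCovQuotient T A) (hAbar : IsMinCovQuotient T Abar) :
    ∃ p : GraphHom A Abar, p.IsCovering := by
  obtain ⟨hTree, _, hFC⟩ := hT
  obtain ⟨piA, hpiA⟩ := hA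
  obtain ⟨⟨piAb, hpiAb⟩, hmin⟩ := hAbar
  -- the cone graph is a covering quotient
  have hCcov : IsCovQuotient T (S8.coneGraph T) := ⟨S8.coneHom T, S8.coneHom_covering T⟩
  -- coverings from A and Abar to the cone graph
  have hpA := S8.quotHom_covering hTree piA hpiA
  have hpAb := S8.quotHom_covering hTree piAb hpiAb
  set pA := S8.quotHom hTree piA hpiA with hpAdef
  set pAb := S8.quotHom hTree piAb hpiAb with hpAbdef
  -- finiteness and cardinality comparison
  have hCfin : Finite (S8.coneGraph T).V := S8.coneGraph_finite T hFC
  have hcard : Cardinal.mk Abar.V ≤ Cardinal.mk (S8.coneGraph T).V := hmin _ hCcov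
  have hClt : Cardinal.mk (S8.coneGraph T).V < Cardinal.aleph0 :=
    Cardinal.mk_lt_aleph0_iff.mpr hCfin
  have hAbfin : Finite Abar.V :=
    Cardinal.mk_lt_aleph0_iff.mp (lt_of_le_of_lt hcard hClt)
  have hnat : Nat.card Abar.V ≤ Nat.card (S8.coneGraph T).V :=
    Cardinal.toNat_le_toNat hcard hClt
  have hvbij : Function.Bijective pAb.v :=
    Function.Surjective.bijective_of_nat_card_le hpAb.1 hnat
  -- pAb is an isomorphism
  have hebij : Function.Bijective pAb.e := by
    constructor
    · intro e1 e2 h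
      have hs12 : Abar.s e1 = Abar.s e2 := by
        apply hvbij.1
        rw [← pAb.s_eq, ← pAb.s_eq, h]
      exact S8.outMap_inj_val pAb (S8.outMap_bijective pAb hpAb.2 (Abar.s e1))
        rfl hs12.symm h
    · intro E'
      obtain ⟨b, hb⟩ := hvbij.2 ((S8.coneGraph T).s E')
      obtain ⟨e, _, he⟩ := S8.outMap_surj_val pAb
        (S8.outMap_bijective pAb hpAb.2 b) (f := E') hb.symm
      exact ⟨e, he⟩
  have hIso : pAb.IsIso := ⟨hvbij, hebij⟩
  refine ⟨S8.GHcomp pA (S8.GHinv pAb hIso), ?_⟩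
  exact S8.covering_comp _ _ hpA
    (S8.covering_of_iso _ (S8.GHinv_isIso pAb hIso))
end

section
/- Let 𝒜 = (Q, δ, ε) be a geometrically minimal DFA over Σ with language ℒ and path language tree T, and let n ∈ ℕ₀. Let Sym(n) := ∏_{v∈ℒ, |v|=n} Sym(q(v)). Then: for every g ∈ Rist(n) and every v ∈ ℒ of length n, the local injection ᵛσ(g) lies in Sym(q(v)); the map σₙ : Rist(n) → Sym(n), g ↦ (ᵛσ(g))_{v∈ℒ, |v|=n}, is a surjective group homomorphism with kernel Rist(n+1); and σₙ admits a group-theoretic section. In particular the sequence 1 → Rist(n+1) → Rist(n) → Sym(n) → 1 is split exact, so Rist(n) is a semidirect product of Sym(n) with Rist(n+1). -/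
namespace Stmt19Aux

open PDFA

variable {A B C : Type}

/-- The language of the automaton `M` started at state `q`. -/
def lang (M : PDFA A) (q : M.Q) : List A → Prop := fun w => (M.run q w).isSome

/-- An abstract isomorphism of word-languages viewed as trees. -/
structure WIso (L1 : List A → Prop) (L2 : List B → Prop) (f : List A → List B) : Prop where
  nil : f [] = []
  maps : ∀ w, L1 w → L2 (f w)
  len : ∀ w, L1 w → (f w).length = w.length
  child : ∀ w a, L1 (w ++ [a]) → ∃ b, f (w ++ [a]) = f w ++ [b]
  inj : ∀ w w', L1 w → L1 w' → f w = f w' → w = w'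
  surj : ∀ u, L2 u → ∃ w, L1 w ∧ f w = u

/-- Prefix-closedness (one step). -/
def PC (L : List A → Prop) : Prop := ∀ w a, L (w ++ [a]) → L w

lemma PC.prefix {L : List A → Prop} (h : PC L) :
    ∀ (u w : List A), L (w ++ u) → L w := by
  intro u
  induction u using List.reverseRecOn with
  | nil => intro w hw; simpa using hw
  | append_singleton u c ih =>
    intro w hw
    rw [← List.append_assoc] at hw
    exact ih w (h _ _ hw)

lemma WIso.id_iso (L : List A → Prop) : WIso L L (fun w => w) where
  nil := rfl
  maps := fun _ h => h
  len := fun _ _ => rfl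
  child := fun _ a _ => ⟨a, rfl⟩
  inj := fun _ _ _ _ h => h
  surj := fun u hu => ⟨u, hu, rfl⟩

lemma WIso.comp {L1 : List A → Prop} {L2 : List B → Prop} {L3 : List C → Prop}
    {f : List A → List B} {g : List B → List C}
    (hf : WIso L1 L2 f) (hg : WIso L2 L3 g) : WIso L1 L3 (fun w => g (f w)) where
  nil := by rw [hf.nil, hg.nil]
  maps := fun w h => hg.maps _ (hf.maps _ h)
  len := fun w h => by rw [hg.len _ (hf.maps _ h), hf.len _ h]
  child := fun w a h => by
    obtain ⟨b, hb⟩ := hf.child w a h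
    obtain ⟨c, hc⟩ := hg.child (f w) b (by rw [← hb]; exact hf.maps _ h)
    exact ⟨c, by rw [hb, hc]⟩
  inj := fun w w' h h' he =>
    hf.inj w w' h h' (hg.inj _ _ (hf.maps _ h) (hf.maps _ h') he)
  surj := fun u hu => by
    obtain ⟨v, hv, hvu⟩ := hg.surj u hu
    obtain ⟨w, hw, hwv⟩ := hf.surj v hv
    exact ⟨w, hw, by rw [hwv, hvu]⟩

lemma WIso.prefixAppend {L1 : List A → Prop} {L2 : List B → Prop} {f : List A → List B}
    (hf : WIso L1 L2 f) (hc : PC L1) :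
    ∀ (u w : List A), L1 (w ++ u) → ∃ z, f (w ++ u) = f w ++ z ∧ z.length = u.length := by
  intro u
  induction u using List.reverseRecOn with
  | nil => intro w hw; exact ⟨[], by simp, by simp⟩
  | append_singleton u c ih =>
    intro w hw
    rw [← List.append_assoc] at hw
    obtain ⟨z, hz, hzl⟩ := ih w (hc _ _ hw)
    obtain ⟨b, hb⟩ := hf.child _ c hw
    refine ⟨z ++ [b], ?_, by simp [hzl]⟩
    rw [← List.append_assoc, hb, hz, List.append_assoc]

lemma WIso.symm {L1 : List A → Prop} {L2 : List B → Prop} {f : List A → List B}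
    (hf : WIso L1 L2 f) (hc : PC L1) (hnil : L1 []) :
    ∃ g, WIso L2 L1 g := by
  classical
  refine ⟨fun u => if h : ∃ w, L1 w ∧ f w = u then h.choose else [], ?_⟩
  have key : ∀ u, L2 u → L1 (if h : ∃ w, L1 w ∧ f w = u then h.choose else []) ∧
      f (if h : ∃ w, L1 w ∧ f w = u then h.choose else []) = u := by
    intro u hu
    have h : ∃ w, L1 w ∧ f w = u := hf.surj u hu
    rw [dif_pos h]
    exact ⟨h.choose_spec.1, h.choose_spec.2⟩
  constructor
  · by_cases h : ∃ w, L1 w ∧ f w = ([] : List B)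
    · rw [dif_pos h]
      have := hf.len _ h.choose_spec.1
      rw [h.choose_spec.2] at this
      exact List.length_eq_zero_iff.mp this.symm
    · rw [dif_neg h]
  · intro u hu; exact (key u hu).1
  · intro u hu
    have := hf.len _ (key u hu).1
    rw [(key u hu).2] at this
    exact this.symm
  · intro u b hub
    obtain ⟨hw, hfw⟩ := key _ hub
    generalize (if h : ∃ w, L1 w ∧ f w = u ++ [b] then h.choose else []) = w at hw hfw
    have hwne : w ≠ [] := by
      intro h0
      rw [h0, hf.nil] at hfw
      simp at hfw
    obtain ⟨w', a, rfl⟩ : ∃ w' a, w = w' ++ [a] := by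
      rcases List.eq_nil_or_concat w with h | ⟨w', a, h⟩
      · exact absurd h hwne
      · exact ⟨w', a, by simpa [List.concat_eq_append] using h⟩
    obtain ⟨b', hb'⟩ := hf.child w' a hw
    rw [hb'] at hfw
    have hfw' : f w' = u ∧ b' = b := by
      have hl : (f w').length = u.length := by
        have h3 := congrArg List.length hfw
        simp at h3
        omega
      constructor
      · exact List.append_inj_left hfw hl
      · have := List.append_inj_right hfw hl
        simpa using this
    refine ⟨a, ?_⟩
    congr 1
    -- show w' = chosen preimage of u
    have hu2 : L2 u := by rw [← hfw'.1]; exact hf.maps _ (hc _ _ hw)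
    obtain ⟨hw2, hfw2⟩ := key u hu2
    exact (hf.inj _ _ hw2 (hc _ _ hw) (by rw [hfw2, hfw'.1])).symm
  · intro u u' hu hu' he
    have h1 := (key u hu).2
    have h2 := (key u' hu').2
    rw [← h1, ← h2, he]
  · intro w hw
    refine ⟨f w, hf.maps _ hw, ?_⟩
    obtain ⟨hw2, hfw2⟩ := key (f w) (hf.maps _ hw)
    exact hf.inj _ _ hw2 hw hfw2

section Lang

variable {A B : Type}

lemma lang_nil (M : PDFA A) (q : M.Q) : lang M q [] := by
  simp [lang, PDFA.run]

lemma run_cons (M : PDFA A) (q : M.Q) (a : A) (w : List A) :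
    M.run q (a :: w) = (M.δ q a).bind fun q' => M.run q' w := rfl

lemma lang_pc (M : PDFA A) (q : M.Q) : PC (lang M q) :=
  fun _ _ h => M.isSome_of_append h

lemma lang_cons {M : PDFA A} {q q' : M.Q} {a : A} (h : M.δ q a = some q') (w : List A) :
    lang M q (a :: w) ↔ lang M q' w := by
  simp [lang, run_cons, h]

lemma lang_single {M : PDFA A} {q : M.Q} {a : A} : lang M q [a] ↔ (M.δ q a).isSome := by
  cases h : M.δ q a <;> simp [lang, run_cons, h, PDFA.run]

lemma lang_head {M : PDFA A} {q : M.Q} {a : A} {w : List A} (h : lang M q (a :: w)) :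
    lang M q [a] := by
  rw [lang_single]
  rw [lang, run_cons] at h
  cases hd : M.δ q a with
  | none => rw [hd] at h; simp at h
  | some q' => simp

lemma WIso.firstLetter {M : PDFA A} {N : PDFA B} {p : M.Q} {r : N.Q} {f : List A → List B}
    (hW : WIso (lang M p) (lang N r) f) {a : A} (ha : lang M p [a]) :
    ∃ b, f [a] = [b] ∧ (N.δ r b).isSome := by
  obtain ⟨b, hb⟩ := hW.child [] a (by simpa using ha)
  rw [hW.nil] at hb
  simp only [List.nil_append] at hb
  refine ⟨b, hb, ?_⟩
  rw [← lang_single]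
  rw [← hb]
  exact hW.maps _ ha

theorem WIso.cone {M : PDFA A} {N : PDFA B} {p p₂ : M.Q} {r r₂ : N.Q} {f : List A → List B}
    (hW : WIso (lang M p) (lang N r) f) {a : A} {b : B}
    (hpa : M.δ p a = some p₂) (hfb : f [a] = [b]) (hrb : N.δ r b = some r₂) :
    WIso (lang M p₂) (lang N r₂) (fun u => (f (a :: u)).tail) := by
  have key : ∀ u, lang M p₂ u → ∃ z, f (a :: u) = b :: z ∧ z.length = u.length := by
    intro u hu
    have h1 : lang M p (a :: u) := (lang_cons hpa u).mpr hu
    obtain ⟨z, hz, hzl⟩ := hW.prefixAppend (lang_pc M p) u [a] (by simpa using h1)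
    refine ⟨z, ?_, hzl⟩
    have : f (a :: u) = f [a] ++ z := by simpa using hz
    rw [this, hfb]
    rfl
  constructor
  · have : lang M p₂ [] := lang_nil _ _
    obtain ⟨z, hz, hzl⟩ := key [] this
    simp only [List.length_nil, List.length_eq_zero_iff] at hzl
    rw [hz, hzl]
    rfl
  · intro u hu
    obtain ⟨z, hz, _⟩ := key u hu
    rw [hz]
    have h1 : lang N r (b :: z) := by
      rw [← hz]
      exact hW.maps _ ((lang_cons hpa u).mpr hu)
    simpa using (lang_cons hrb z).mp h1
  · intro u hu
    obtain ⟨z, hz, hzl⟩ := key u hu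
    rw [hz]
    simpa using hzl
  · intro u c hc
    obtain ⟨z, hz, _⟩ := key u (lang_pc _ _ _ _ hc)
    have h1 : lang M p ((a :: u) ++ [c]) := by
      simpa using (lang_cons hpa (u ++ [c])).mpr hc
    obtain ⟨d, hd⟩ := hW.child (a :: u) c h1
    refine ⟨d, ?_⟩
    have : f (a :: (u ++ [c])) = f (a :: u) ++ [d] := by simpa using hd
    rw [this, hz]
    simp
  · intro u u' hu hu' he
    obtain ⟨z, hz, _⟩ := key u hu
    obtain ⟨z', hz', _⟩ := key u' hu'
    simp only [hz, hz', List.tail_cons] at he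
    have : f (a :: u) = f (a :: u') := by rw [hz, hz', he]
    have h2 := hW.inj _ _ ((lang_cons hpa u).mpr hu) ((lang_cons hpa u').mpr hu') this
    simpa using h2
  · intro v hv
    have h1 : lang N r (b :: v) := (lang_cons hrb v).mpr hv
    obtain ⟨w, hw, hfw⟩ := hW.surj _ h1
    have hwne : w ≠ [] := by
      intro h0
      rw [h0, hW.nil] at hfw
      simp at hfw
    obtain ⟨a₀, u, rfl⟩ : ∃ a₀ u, w = a₀ :: u := by
      cases w with
      | nil => exact absurd rfl hwne
      | cons a₀ u => exact ⟨a₀, u, rfl⟩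
    have ha₀ : lang M p [a₀] := by
      have := (lang_pc M p).prefix u [a₀] (by simpa using hw)
      exact this
    obtain ⟨b₀, hb₀, _⟩ := hW.firstLetter ha₀
    obtain ⟨z, hz, _⟩ := hW.prefixAppend (lang_pc M p) u [a₀] (by simpa using hw)
    have hfc : f (a₀ :: u) = b₀ :: z := by
      have : f (a₀ :: u) = f [a₀] ++ z := by simpa using hz
      rw [this, hb₀]; rfl
    rw [hfc] at hfw
    obtain ⟨hb₀b, hzv⟩ : b₀ = b ∧ z = v := by
      constructor
      · exact (List.cons.injEq _ _ _ _ ▸ hfw).1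
      · exact (List.cons.injEq _ _ _ _ ▸ hfw).2
    have ha : lang M p [a] := lang_single.mpr (by rw [hpa]; rfl)
    have haa : a₀ = a := by
      have := hW.inj [a₀] [a] ha₀ ha (by rw [hb₀, hfb, hb₀b])
      simpa using this
    subst haa
    refine ⟨u, (lang_cons hpa u).mp hw, ?_⟩
    rw [hfc, hb₀b, hzv]
    rfl

end Lang

section Quot

variable {A : Type}

/-- The setoid identifying states with isomorphic path language trees. -/
def wsetoid (M : PDFA A) : Setoid M.Q where
  r p q := ∃ f, WIso (lang M p) (lang M q) f
  iseqv := by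
    refine ⟨fun p => ⟨_, WIso.id_iso _⟩, ?_, ?_⟩
    · rintro p q ⟨f, hf⟩
      exact hf.symm (lang_pc _ _) (lang_nil _ _)
    · rintro p q r ⟨f, hf⟩ ⟨g, hg⟩
      exact ⟨_, hf.comp hg⟩

/-- The quotient automaton. -/
noncomputable def NQuot (M : PDFA A) : PDFA A where
  Q := Quotient (wsetoid M)
  finQ := by have := M.finQ; exact Quotient.finite _
  neQ := M.neQ.map (Quotient.mk _)
  δ := fun c a => (M.δ c.out a).map (Quotient.mk (wsetoid M))
  init := Quotient.mk _ M.init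

/-- A chosen word-isomorphism from a state to its representative. -/
noncomputable def kiso (M : PDFA A) (q : M.Q) :
    {f : List A → List A // WIso (lang M q) (lang M (Quotient.mk (wsetoid M) q).out) f} := by
  have h0 := Quotient.exact (Quotient.out_eq (Quotient.mk (wsetoid M) q))
  have h1 : ∃ f, WIso (lang M (Quotient.mk (wsetoid M) q).out) (lang M q) f := h0
  have h2 : ∃ f, WIso (lang M q) (lang M (Quotient.mk (wsetoid M) q).out) f :=
    h1.choose_spec.symm (lang_pc _ _) (lang_nil _ _)
  exact ⟨h2.choose, h2.choose_spec⟩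

/-- Head letter with a default. -/
noncomputable def hdl {A : Type} (hA : Nonempty A) (l : List A) : A :=
  match l with
  | c :: _ => c
  | [] => Classical.choice hA

lemma hdl_eq {A : Type} (hA : Nonempty A) {l : List A} {c : A} (h : l = [c]) :
    hdl hA l = c := by rw [h]; rfl

/-- The word map underlying the isomorphism between the path tree of `M` and that
of its quotient automaton. -/
noncomputable def F (M : PDFA A) (hA : Nonempty A) :
    List A → M.Q → (List A → List A) → List A
  | [], _, _ => []
  | a :: w, q, f =>
    hdl hA ((kiso M q).1 (f [a])) ::
      F M hA w ((M.δ (Quotient.mk (wsetoid M) q).out (hdl hA ((kiso M q).1 (f [a])))).getD q)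
        (fun u => ((kiso M q).1 (f (a :: u))).tail)

lemma F_nil (M : PDFA A) (hA : Nonempty A) (q : M.Q) (f : List A → List A) :
    F M hA [] q f = [] := rfl

lemma F_cons (M : PDFA A) (hA : Nonempty A) (a : A) (w : List A) (q : M.Q)
    (f : List A → List A) :
    F M hA (a :: w) q f =
      hdl hA ((kiso M q).1 (f [a])) ::
        F M hA w ((M.δ (Quotient.mk (wsetoid M) q).out (hdl hA ((kiso M q).1 (f [a])))).getD q)
          (fun u => ((kiso M q).1 (f (a :: u))).tail) := rfl

lemma stepLemma {M : PDFA A} (hA : Nonempty A) {p q : M.Q} {f : List A → List A}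
    (hW : WIso (lang M p) (lang M q) f) {a : A} (ha : lang M p [a]) :
    ∃ (b : A) (p₂ r₂ : M.Q), M.δ p a = some p₂ ∧
      M.δ (Quotient.mk (wsetoid M) q).out b = some r₂ ∧
      (kiso M q).1 (f [a]) = [b] ∧
      WIso (lang M p₂) (lang M r₂) (fun u => ((kiso M q).1 (f (a :: u))).tail) := by
  have hW' : WIso (lang M p) (lang M (Quotient.mk (wsetoid M) q).out)
      (fun u => (kiso M q).1 (f u)) := hW.comp (kiso M q).2
  obtain ⟨b, hfb, hb⟩ := hW'.firstLetter ha
  obtain ⟨p₂, hp₂⟩ := Option.isSome_iff_exists.mp (lang_single.mp ha)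
  obtain ⟨r₂, hr₂⟩ := Option.isSome_iff_exists.mp hb
  exact ⟨b, p₂, r₂, hp₂, hr₂, hfb, hW'.cone hp₂ hfb hr₂⟩

lemma nrun_cons {M : PDFA A} {q : M.Q} {b : A} {r₂ : M.Q}
    (hr : M.δ (Quotient.mk (wsetoid M) q).out b = some r₂) (z : List A) :
    (NQuot M).run (Quotient.mk (wsetoid M) q) (b :: z) =
      (NQuot M).run (Quotient.mk (wsetoid M) r₂) z := by
  have hδ : (NQuot M).δ (Quotient.mk (wsetoid M) q) b =
      some (Quotient.mk (wsetoid M) r₂) := by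
    show (M.δ (Quotient.mk (wsetoid M) q).out b).map _ = _
    rw [hr]; rfl
  rw [run_cons (NQuot M) (Quotient.mk (wsetoid M) q), hδ]
  rfl

lemma nrun_cons_isSome {M : PDFA A} {q : M.Q} {c : A} {u : List A}
    (h : ((NQuot M).run (Quotient.mk (wsetoid M) q) (c :: u)).isSome) :
    ∃ r₂, M.δ (Quotient.mk (wsetoid M) q).out c = some r₂ ∧
      ((NQuot M).run (Quotient.mk (wsetoid M) r₂) u).isSome := by
  cases hd : M.δ (Quotient.mk (wsetoid M) q).out c with
  | none =>
    exfalso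
    rw [run_cons (NQuot M) (Quotient.mk (wsetoid M) q)] at h
    have hδ : (NQuot M).δ (Quotient.mk (wsetoid M) q) c = none := by
      show (M.δ (Quotient.mk (wsetoid M) q).out c).map _ = _
      rw [hd]; rfl
    rw [hδ] at h
    simp at h
  | some r₂ =>
    refine ⟨r₂, rfl, ?_⟩
    rwa [nrun_cons hd] at h

theorem bigF_maps (M : PDFA A) (hA : Nonempty A) :
    ∀ (w : List A) (p q : M.Q) (f : List A → List A), WIso (lang M p) (lang M q) f →
      lang M p w →
      ((NQuot M).run (Quotient.mk (wsetoid M) q) (F M hA w q f)).isSome ∧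
        (F M hA w q f).length = w.length := by
  intro w
  induction w with
  | nil =>
    intro p q f hW hw
    exact ⟨by simp [F_nil, PDFA.run]; rfl, rfl⟩
  | cons a w ih =>
    intro p q f hW hw
    have ha : lang M p [a] := lang_head hw
    obtain ⟨b, p₂, r₂, hp₂, hr₂, hfb, hW₂⟩ := stepLemma hA hW ha
    have hw₂ : lang M p₂ w := (lang_cons hp₂ w).mp hw
    obtain ⟨h1, h2⟩ := ih p₂ r₂ _ hW₂ hw₂
    rw [F_cons, hdl_eq hA hfb, hr₂]
    simp only [Option.getD_some]
    refine ⟨?_, by simpa using h2⟩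
    rw [nrun_cons hr₂]
    exact h1

theorem bigF_child (M : PDFA A) (hA : Nonempty A) :
    ∀ (w : List A) (c : A) (p q : M.Q) (f : List A → List A),
      WIso (lang M p) (lang M q) f → lang M p (w ++ [c]) →
      ∃ d, F M hA (w ++ [c]) q f = F M hA w q f ++ [d] := by
  intro w
  induction w with
  | nil =>
    intro c p q f hW hw
    have ha : lang M p [c] := by simpa using hw
    obtain ⟨b, p₂, r₂, hp₂, hr₂, hfb, hW₂⟩ := stepLemma hA hW ha
    refine ⟨b, ?_⟩
    show F M hA (c :: []) q f = _
    rw [F_cons, hdl_eq hA hfb, F_nil]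
    rfl
  | cons a w ih =>
    intro c p q f hW hw
    have hw' : lang M p (a :: (w ++ [c])) := by simpa using hw
    have ha : lang M p [a] := lang_head hw'
    obtain ⟨b, p₂, r₂, hp₂, hr₂, hfb, hW₂⟩ := stepLemma hA hW ha
    have hw₂ : lang M p₂ (w ++ [c]) := (lang_cons hp₂ _).mp hw'
    obtain ⟨d, hd⟩ := ih c p₂ r₂ _ hW₂ hw₂
    refine ⟨d, ?_⟩
    show F M hA (a :: (w ++ [c])) q f = _
    rw [F_cons, F_cons, hdl_eq hA hfb]
    rw [hr₂]
    simp only [Option.getD_some]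
    rw [hd]
    rfl

theorem bigF_inj (M : PDFA A) (hA : Nonempty A) :
    ∀ (w w' : List A) (p q : M.Q) (f : List A → List A),
      WIso (lang M p) (lang M q) f → lang M p w → lang M p w' →
      F M hA w q f = F M hA w' q f → w = w' := by
  intro w
  induction w with
  | nil =>
    intro w' p q f hW _ hw' he
    have := (bigF_maps M hA w' p q f hW hw').2
    rw [← he] at this
    simp only [F_nil, List.length_nil] at this
    exact (List.length_eq_zero_iff.mp this.symm).symm
  | cons a w ih =>
    intro w' p q f hW hw hw' he
    cases w' with
    | nil =>
      exfalso
      rw [F_nil, F_cons] at he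
      simp at he
    | cons a' w₂ =>
      have ha : lang M p [a] := lang_head hw
      have ha' : lang M p [a'] := lang_head hw'
      obtain ⟨b, p₂, r₂, hp₂, hr₂, hfb, hW₂⟩ := stepLemma hA hW ha
      obtain ⟨b', p₂', r₂', hp₂', hr₂', hfb', hW₂'⟩ := stepLemma hA hW ha'
      rw [F_cons, F_cons, hdl_eq hA hfb, hdl_eq hA hfb'] at he
      have hbb : b = b' := (List.cons.injEq _ _ _ _ ▸ he).1
      have hW' : WIso (lang M p) (lang M (Quotient.mk (wsetoid M) q).out)
          (fun u => (kiso M q).1 (f u)) := hW.comp (kiso M q).2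
      have haa : a = a' := by
        have h0 : (kiso M q).1 (f [a]) = (kiso M q).1 (f [a']) := by
          rw [hfb, hfb', hbb]
        have := hW'.inj [a] [a'] ha ha' h0
        simpa using this
      subst haa
      have hpp : p₂ = p₂' := by rw [hp₂] at hp₂'; exact Option.some_injective _ hp₂'
      subst hpp
      subst hbb
      have hrr : r₂ = r₂' := by rw [hr₂] at hr₂'; exact Option.some_injective _ hr₂'
      subst hrr
      have htl : F M hA w ((M.δ (Quotient.mk (wsetoid M) q).out b).getD q)
          (fun u => ((kiso M q).1 (f (a :: u))).tail) =
          F M hA w₂ ((M.δ (Quotient.mk (wsetoid M) q).out b).getD q)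
          (fun u => ((kiso M q).1 (f (a :: u))).tail) :=
        (List.cons.injEq _ _ _ _ ▸ he).2
      rw [hr₂] at htl
      simp only [Option.getD_some] at htl
      have := ih w₂ p₂ r₂ _ hW₂ ((lang_cons hp₂ w).mp hw) ((lang_cons hp₂ w₂).mp hw') htl
      rw [this]

theorem bigF_surj (M : PDFA A) (hA : Nonempty A) :
    ∀ (u : List A) (p q : M.Q) (f : List A → List A),
      WIso (lang M p) (lang M q) f →
      ((NQuot M).run (Quotient.mk (wsetoid M) q) u).isSome →
      ∃ w, lang M p w ∧ F M hA w q f = u := by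
  intro u
  induction u with
  | nil => intro p q f hW _; exact ⟨[], lang_nil _ _, rfl⟩
  | cons c u ih =>
    intro p q f hW hu
    obtain ⟨r₂', hδ, hrest⟩ := nrun_cons_isSome hu
    have hW' : WIso (lang M p) (lang M (Quotient.mk (wsetoid M) q).out)
        (fun u => (kiso M q).1 (f u)) := hW.comp (kiso M q).2
    obtain ⟨w₀, hw₀, hfw₀⟩ := hW'.surj [c] (lang_single.mpr (by rw [hδ]; rfl))
    obtain ⟨a, rfl⟩ : ∃ a, w₀ = [a] := by
      have := hW'.len _ hw₀
      rw [hfw₀] at this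
      simp only [List.length_singleton] at this
      exact List.length_eq_one_iff.mp this.symm
    obtain ⟨b, p₂, r₂, hp₂, hr₂, hfb, hW₂⟩ := stepLemma hA hW hw₀
    have hbc : b = c := by
      rw [hfb] at hfw₀
      simpa using hfw₀
    subst hbc
    have hrr : r₂ = r₂' := by rw [hr₂] at hδ; exact Option.some_injective _ hδ
    rw [← hrr] at hrest
    obtain ⟨w, hw, hFw⟩ := ih p₂ r₂ _ hW₂ hrest
    refine ⟨a :: w, (lang_cons hp₂ w).mpr hw, ?_⟩
    rw [F_cons, hdl_eq hA hfb, hr₂]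
    simp only [Option.getD_some]
    rw [hFw]

theorem wiso_init (M : PDFA A) (hA : Nonempty A) :
    WIso (lang M M.init) (lang (NQuot M) (NQuot M).init)
      (fun w => F M hA w M.init (fun w => w)) := by
  have hW := WIso.id_iso (lang M M.init)
  constructor
  · rfl
  · intro w hw
    exact (bigF_maps M hA w M.init M.init _ hW hw).1
  · intro w hw
    exact (bigF_maps M hA w M.init M.init _ hW hw).2
  · intro w a hw
    exact bigF_child M hA w a M.init M.init _ hW hw
  · intro w w' hw hw' he
    exact bigF_inj M hA w w' M.init M.init _ hW hw hw' he
  · intro u hu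
    exact bigF_surj M hA u M.init M.init _ hW hu

end Quot

section GraphIso

variable {A B : Type}

theorem wiso_pathTree {M : PDFA A} {N : PDFA B} {f : List A → List B}
    (h : WIso (lang M M.init) (lang N N.init) f) :
    RGraph.Iso M.pathTree N.pathTree := by
  classical
  refine ⟨⟨fun w => ⟨f w.1, h.maps _ w.2⟩,
    fun x => ⟨(f x.1.1, (h.child x.1.1 x.1.2 x.2).choose), ?_⟩, ?_, ?_, ?_⟩, ?_, ?_⟩
  · show (N.run N.init (f x.1.1 ++ [(h.child x.1.1 x.1.2 x.2).choose])).isSome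
    rw [← (h.child x.1.1 x.1.2 x.2).choose_spec]
    exact h.maps _ x.2
  · exact Subtype.ext h.nil
  · intro x
    exact Subtype.ext rfl
  · intro x
    exact Subtype.ext ((h.child x.1.1 x.1.2 x.2).choose_spec).symm
  · constructor
    · intro x y hxy
      exact Subtype.ext (h.inj _ _ x.2 y.2 (congrArg Subtype.val hxy))
    · intro u
      obtain ⟨w, hw, hfw⟩ := h.surj u.1 u.2
      exact ⟨⟨w, hw⟩, Subtype.ext hfw⟩
  · constructor
    · intro x y hxy
      have h1 : f x.1.1 = f y.1.1 ∧
          (h.child x.1.1 x.1.2 x.2).choose = (h.child y.1.1 y.1.2 y.2).choose := by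
        have := congrArg Subtype.val hxy
        exact ⟨congrArg Prod.fst this, congrArg Prod.snd this⟩
      have hw : x.1.1 = y.1.1 :=
        h.inj _ _ (M.isSome_of_append x.2) (M.isSome_of_append y.2) h1.1
      have h2 : f (x.1.1 ++ [x.1.2]) = f (y.1.1 ++ [y.1.2]) := by
        rw [(h.child x.1.1 x.1.2 x.2).choose_spec, (h.child y.1.1 y.1.2 y.2).choose_spec]
        exact congrArg₂ (· ++ ·) h1.1 (congrArg (fun b => [b]) h1.2)
      have h3 : x.1.1 ++ [x.1.2] = y.1.1 ++ [y.1.2] := h.inj _ _ x.2 y.2 h2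
      have ha : x.1.2 = y.1.2 := by
        have := List.append_inj_right h3 (by rw [hw])
        simpa using this
      apply Subtype.ext
      exact Prod.ext hw ha
    · rintro ⟨⟨u, c⟩, hy⟩
      obtain ⟨w, hw, hfw⟩ := h.surj (u ++ [c]) hy
      have hwne : w ≠ [] := by
        intro h0
        rw [h0, h.nil] at hfw
        simp at hfw
      obtain ⟨w', a, rfl⟩ : ∃ w' a, w = w' ++ [a] := by
        rcases List.eq_nil_or_concat w with h0 | ⟨w', a, h0⟩
        · exact absurd h0 hwne
        · exact ⟨w', a, by simpa [List.concat_eq_append] using h0⟩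
      obtain ⟨b, hb⟩ := h.child w' a hw
      rw [hb] at hfw
      have hl : (f w').length = u.length := by
        have h3 := congrArg List.length hfw
        simp at h3
        omega
      have hfu : f w' = u := List.append_inj_left hfw hl
      have hbc : b = c := by simpa using List.append_inj_right hfw hl
      refine ⟨⟨(w', a), hw⟩, ?_⟩
      apply Subtype.ext
      refine Prod.ext hfu ?_
      show (h.child w' a hw).choose = c
      rw [← hbc]
      have h4 := (h.child w' a hw).choose_spec
      have h5 := List.append_inj_right (hb.symm.trans h4) rfl
      simpa using h5.symm

/-- Key consequence of geometric minimality: states with isomorphic path language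
trees are equal. -/
theorem states_eq {M : PDFA A} (hfin : Finite A) (hne : Nonempty A) (hM : M.GeomMinimal)
    {q1 q2 : M.Q} (h : ∃ f, WIso (lang M q1) (lang M q2) f) : q1 = q2 := by
  by_contra hq
  have hiso : RGraph.Iso M.pathTree (NQuot M).pathTree := wiso_pathTree (wiso_init M hne)
  have hN := (NQuot M).finQ
  have hcard := hM A hfin hne (NQuot M) hiso
  have hlt : Nat.card (NQuot M).Q < Nat.card M.Q := by
    have := M.finQ
    letI : Fintype M.Q := Fintype.ofFinite _
    letI : Fintype (NQuot M).Q := Fintype.ofFinite _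
    rw [Nat.card_eq_fintype_card, Nat.card_eq_fintype_card]
    refine Fintype.card_lt_of_surjective_not_injective (Quotient.mk (wsetoid M))
      (fun c => ⟨c.out, c.out_eq⟩) ?_
    intro hinj
    exact hq (hinj (Quotient.sound h))
  omega

end GraphIso

section Tree

variable {A : Type} {M : PDFA A}

lemma mem_autGroup_iff {G : RGraph} {g : Equiv.Perm G.V} :
    g ∈ G.autGroup ↔ (g G.root = G.root ∧ ∀ v w, G.Adj v w ↔ G.Adj (g v) (g w)) :=
  Iff.rfl

lemma mem_fixOutside_iff {G : RGraph} {v : G.V} {g : Equiv.Perm G.V} :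
    g ∈ G.fixOutside v ↔ ∀ w, ¬ G.Reach v w → g w = w :=
  Iff.rfl

lemma mem_rist_iff {G : RGraph} {v : G.V} {g : Equiv.Perm G.V} :
    g ∈ G.rist v ↔ g ∈ G.autGroup ∧ g ∈ G.fixOutside v :=
  Subgroup.mem_inf

lemma adj_iff {x y : M.pathTree.V} :
    M.pathTree.Adj x y ↔ ∃ a, y.1 = x.1 ++ [a] := by
  constructor
  · rintro ⟨e, hs, ht⟩
    refine ⟨e.1.2, ?_⟩
    have h1 : y.1 = e.1.1 ++ [e.1.2] := by rw [← ht]; rfl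
    have h2 : x.1 = e.1.1 := by rw [← hs]; rfl
    rw [h1, h2]
  · rintro ⟨a, ha⟩
    refine ⟨⟨(x.1, a), ?_⟩, Subtype.ext rfl, Subtype.ext ?_⟩
    · show (M.run M.init (x.1 ++ [a])).isSome
      rw [← ha]; exact y.2
    · exact ha.symm

lemma pathFrom_cons {G : RGraph} {q : G.V} {e : G.E} {l : List G.E}
    (h : G.PathFrom q (e :: l)) : G.s e = q ∧ G.PathFrom (G.t e) l := by
  obtain ⟨hc, hh⟩ := h
  refine ⟨hh e rfl, ?_, ?_⟩
  · exact hc.tail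
  · intro f hf
    cases l with
    | nil => simp at hf
    | cons f' l =>
      simp at hf
      subst hf
      exact (List.isChain_cons_cons.mp hc).1.symm

lemma reach_iff {x y : M.pathTree.V} :
    M.pathTree.Reach x y ↔ x.1 <+: y.1 := by
  constructor
  · rintro ⟨l, hl, ht⟩
    suffices h : ∀ (l : List M.pathTree.E) (q : M.pathTree.V), M.pathTree.PathFrom q l →
        q.1 <+: (M.pathTree.pathTarget q l).1 by
      rw [← ht]; exact h l x hl
    intro l
    induction l with
    | nil => intro q _; exact List.prefix_refl _
    | cons e l ih =>
      intro q hq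
      obtain ⟨hs, hp⟩ := pathFrom_cons hq
      have h2 := ih _ hp
      rw [RGraph.pathTarget_cons]
      refine List.IsPrefix.trans ?_ h2
      rw [← hs]
      exact List.prefix_append _ _
  · rintro ⟨u, hu⟩
    induction u using List.reverseRecOn generalizing y with
    | nil =>
      have hxy : x = y := Subtype.ext (by rw [← hu]; simp)
      rw [← hxy]
      exact RGraph.reach_self _ _
    | append_singleton u c ih =>
      have h2 : (M.run M.init ((x.1 ++ u) ++ [c])).isSome := by
        rw [List.append_assoc, hu]; exact y.2
      have hy' : (M.run M.init (x.1 ++ u)).isSome := M.isSome_of_append h2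
      have hr : M.pathTree.Reach x ⟨x.1 ++ u, hy'⟩ := by
        first
        | exact ih _ rfl
        | exact ih rfl
        | exact ih ⟨x.1 ++ u, hy'⟩ rfl
      have hadj : M.pathTree.Adj ⟨x.1 ++ u, hy'⟩ y :=
        adj_iff.mpr ⟨c, by rw [← hu, List.append_assoc]⟩
      obtain ⟨e, hs, ht⟩ := hadj
      rw [← ht]
      apply RGraph.reach_target
      rw [hs]
      exact hr

lemma autCrit {g : Equiv.Perm M.pathTree.V} (hroot : g M.pathTree.root = M.pathTree.root)
    (hfwd : ∀ x y, M.pathTree.Adj x y → M.pathTree.Adj (g x) (g y))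
    (hbwd : ∀ x y, M.pathTree.Adj x y → M.pathTree.Adj (g⁻¹ x) (g⁻¹ y)) :
    g ∈ M.pathTree.autGroup := by
  refine mem_autGroup_iff.mpr ⟨hroot, fun v w => ⟨hfwd v w, fun h => ?_⟩⟩
  have := hbwd _ _ h
  simpa using this

lemma autStep {g : Equiv.Perm M.pathTree.V} (hg : g ∈ M.pathTree.autGroup)
    (x : M.pathTree.V) (a : A) (h : (M.run M.init (x.1 ++ [a])).isSome) :
    ∃ b, (g ⟨x.1 ++ [a], h⟩).1 = (g x).1 ++ [b] := by
  have hadj : M.pathTree.Adj x ⟨x.1 ++ [a], h⟩ := adj_iff.mpr ⟨a, rfl⟩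
  have h2 := ((mem_autGroup_iff.mp hg).2 _ _).mp hadj
  obtain ⟨b, hb⟩ := adj_iff.mp h2
  exact ⟨b, hb⟩

lemma len_eq {g : Equiv.Perm M.pathTree.V} (hg : g ∈ M.pathTree.autGroup) :
    ∀ (l : List A) (h : (M.run M.init l).isSome), (g ⟨l, h⟩).1.length = l.length := by
  intro l
  induction l using List.reverseRecOn with
  | nil =>
    intro h
    have h0 : (⟨[], h⟩ : M.pathTree.V) = M.pathTree.root := Subtype.ext rfl
    rw [h0, (mem_autGroup_iff.mp hg).1]
    rfl
  | append_singleton l a ih =>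
    intro h
    obtain ⟨b, hb⟩ := autStep hg ⟨l, M.isSome_of_append h⟩ a h
    rw [hb]
    simp [ih]

lemma appext {g : Equiv.Perm M.pathTree.V} (hg : g ∈ M.pathTree.autGroup) :
    ∀ (u l : List A) (hl : (M.run M.init l).isSome) (h : (M.run M.init (l ++ u)).isSome),
      ∃ z, (g ⟨l ++ u, h⟩).1 = (g ⟨l, hl⟩).1 ++ z ∧ z.length = u.length := by
  intro u
  induction u using List.reverseRecOn with
  | nil =>
    intro l hl h
    refine ⟨[], ?_, rfl⟩
    have h0 : (⟨l ++ [], h⟩ : M.pathTree.V) = ⟨l, hl⟩ := Subtype.ext (by simp)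
    rw [h0]; simp
  | append_singleton u c ih =>
    intro l hl h
    have h2 : (M.run M.init ((l ++ u) ++ [c])).isSome := by
      rw [List.append_assoc]; exact h
    have h3 := M.isSome_of_append h2
    obtain ⟨b, hb⟩ := autStep hg ⟨l ++ u, h3⟩ c h2
    obtain ⟨z, hz, hzl⟩ := ih l hl h3
    have heq : (⟨l ++ (u ++ [c]), h⟩ : M.pathTree.V) = ⟨(l ++ u) ++ [c], h2⟩ :=
      Subtype.ext (by simp)
    refine ⟨z ++ [b], ?_, by simp [hzl]⟩
    rw [heq, hb, hz]
    simp

/-- The `n`-th rigid level stabilizer. -/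
def Gsup (M : PDFA A) (n : ℕ) : Subgroup (Equiv.Perm M.pathTree.V) :=
  ⨆ v ∈ {v : M.pathTree.V | v.1.length = n}, M.pathTree.rist v

lemma Gsup_le_aut (M : PDFA A) (n : ℕ) : Gsup M n ≤ M.pathTree.autGroup :=
  iSup₂_le fun _ _ => inf_le_left

/-- Permutations fixing all vertices of length at most `n`. -/
def fixShort (M : PDFA A) (n : ℕ) : Subgroup (Equiv.Perm M.pathTree.V) where
  carrier := {g | ∀ x : M.pathTree.V, x.1.length ≤ n → g x = x}
  one_mem' := fun _ _ => rfl
  mul_mem' := by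
    intro a b ha hb x hx
    show a (b x) = x
    rw [hb x hx, ha x hx]
  inv_mem' := by
    intro a ha x hx
    show a.symm x = x
    rw [Equiv.symm_apply_eq]
    exact (ha x hx).symm

lemma mem_fixShort_iff {n : ℕ} {g : Equiv.Perm M.pathTree.V} :
    g ∈ fixShort M n ↔ ∀ x : M.pathTree.V, x.1.length ≤ n → g x = x := Iff.rfl

lemma rist_le_fixShort {v : M.pathTree.V} {n : ℕ} (hv : v.1.length = n) :
    M.pathTree.rist v ≤ fixShort M n := by
  intro g hg
  obtain ⟨hga, hgf⟩ := mem_rist_iff.mp hg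
  rw [mem_fixShort_iff]
  intro x hx
  by_cases hpre : v.1 <+: x.1
  · have hxv : x = v := by
      apply Subtype.ext
      exact (hpre.eq_of_length_le (by omega)).symm
    rw [hxv]
    by_contra hne
    have hnr : ¬ M.pathTree.Reach v (g v) := by
      intro hr
      have hp := reach_iff.mp hr
      have hl : (g v).1.length = v.1.length := len_eq hga v.1 v.2
      exact hne (Subtype.ext (hp.eq_of_length_le (le_of_eq hl)).symm)
    have h2 := mem_fixOutside_iff.mp hgf (g v) hnr
    exact hne (g.injective h2)
  · exact mem_fixOutside_iff.mp hgf x (fun hr => hpre (reach_iff.mp hr))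

lemma Gsup_le_fixShort (M : PDFA A) (n : ℕ) : Gsup M n ≤ fixShort M n :=
  iSup₂_le fun _ hv => rist_le_fixShort hv

lemma take_preserved {g : Equiv.Perm M.pathTree.V} (hg : g ∈ M.pathTree.autGroup) {m : ℕ}
    (hfix : ∀ x : M.pathTree.V, x.1.length ≤ m → g x = x) :
    ∀ (l : List A) (h : (M.run M.init l).isSome), (g ⟨l, h⟩).1.take m = l.take m := by
  intro l
  induction l using List.reverseRecOn with
  | nil =>
    intro h
    rw [hfix ⟨[], h⟩ (by simp)]
  | append_singleton l a ih =>
    intro h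
    by_cases hlen : (l ++ [a]).length ≤ m
    · rw [hfix ⟨l ++ [a], h⟩ hlen]
    · obtain ⟨b, hb⟩ := autStep hg ⟨l, M.isSome_of_append h⟩ a h
      rw [hb]
      have hll : m ≤ l.length := by simp at hlen; omega
      have hgl : m ≤ (g ⟨l, M.isSome_of_append h⟩).1.length := by
        rw [len_eq hg]; exact hll
      rw [List.take_append_of_le_length hgl, List.take_append_of_le_length hll, ih]

lemma Gsup_succ_le (M : PDFA A) (n : ℕ) : Gsup M (n + 1) ≤ Gsup M n := by
  apply iSup₂_le
  intro w hw
  have hw' : w.1.length = n + 1 := hw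
  have hv : (M.run M.init (w.1.take n)).isSome := by
    apply M.isSome_of_append (w := w.1.drop n)
    rw [List.take_append_drop]
    exact w.2
  have hvlen : (⟨w.1.take n, hv⟩ : M.pathTree.V) ∈ {v : M.pathTree.V | v.1.length = n} := by
    show (w.1.take n).length = n
    rw [List.length_take]
    omega
  refine le_trans ?_ (le_iSup₂ (f := fun v (_ : v ∈ {v : M.pathTree.V | v.1.length = n}) =>
    M.pathTree.rist v) ⟨w.1.take n, hv⟩ hvlen)
  intro g hg
  obtain ⟨hga, hgf⟩ := mem_rist_iff.mp hg
  refine mem_rist_iff.mpr ⟨hga, mem_fixOutside_iff.mpr ?_⟩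
  intro u hu
  apply mem_fixOutside_iff.mp hgf
  intro hr
  exact hu (reach_iff.mpr ((List.take_prefix n w.1).trans (reach_iff.mp hr)))

/-- Restriction of a permutation to an invariant set. -/
def restrictPerm {α : Type*} (g : Equiv.Perm α) (C : α → Prop) [DecidablePred C]
    (hC : ∀ x, C (g x) ↔ C x) : Equiv.Perm α where
  toFun := fun x => if C x then g x else x
  invFun := fun x => if C x then g⁻¹ x else x
  left_inv := by
    intro x
    dsimp only
    by_cases h : C x
    · rw [if_pos h, if_pos ((hC x).mpr h)]
      simp
    · rw [if_neg h, if_neg h]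
  right_inv := by
    intro x
    dsimp only
    by_cases h : C x
    · have h2 : C (g⁻¹ x) := by
        have h3 := hC (g⁻¹ x)
        rw [Equiv.Perm.coe_inv, Equiv.apply_symm_apply] at h3
        exact h3.mp h
      rw [if_pos h, if_pos h2]
      simp
    · rw [if_neg h, if_neg h]

lemma restrictPerm_apply {α : Type*} (g : Equiv.Perm α) (C : α → Prop) [DecidablePred C]
    (hC : ∀ x, C (g x) ↔ C x) (x : α) :
    restrictPerm g C hC x = if C x then g x else x := rfl

lemma restrictPerm_inv_apply {α : Type*} (g : Equiv.Perm α) (C : α → Prop) [DecidablePred C]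
    (hC : ∀ x, C (g x) ↔ C x) (x : α) :
    (restrictPerm g C hC)⁻¹ x = if C x then g⁻¹ x else x := rfl

open scoped Classical in
lemma restrict_adj {m : ℕ} {g' : Equiv.Perm M.pathTree.V} (hg' : g' ∈ M.pathTree.autGroup)
    {w : M.pathTree.V} (hwm : w.1.length = m)
    (hfix' : ∀ x : M.pathTree.V, x.1.length ≤ m → g' x = x) :
    ∀ x y, M.pathTree.Adj x y →
      M.pathTree.Adj (if w.1 <+: x.1 then g' x else x) (if w.1 <+: y.1 then g' y else y) := by
  intro x y hadj
  obtain ⟨c, hc⟩ := adj_iff.mp hadj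
  by_cases hx : w.1 <+: x.1
  · have hy : w.1 <+: y.1 := by rw [hc]; exact hx.trans (List.prefix_append _ _)
    rw [if_pos hx, if_pos hy]
    exact ((mem_autGroup_iff.mp hg').2 x y).mp hadj
  · by_cases hy : w.1 <+: y.1
    · have hyw : y.1 = w.1 := by
        have hlen : x.1.length < w.1.length := by
          by_contra hh
          push_neg at hh
          apply hx
          have hy' : w.1 <+: x.1 ++ [c] := hc ▸ hy
          have h1 := List.prefix_iff_eq_take.mp hy'
          rw [List.take_append_of_le_length hh] at h1
          rw [h1]
          exact List.take_prefix _ _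
        have h3 : y.1.length = x.1.length + 1 := by rw [hc]; simp
        have h4 : w.1.length ≤ y.1.length := hy.length_le
        exact (hy.eq_of_length_le (by omega)).symm
      have hyv : y = w := Subtype.ext hyw
      rw [if_neg hx, if_pos hy, hyv, hfix' w (le_of_eq hwm)]
      exact hyv ▸ hadj
    · rw [if_neg hx, if_neg hy]
      exact hadj

theorem decomp (hA : Finite A) {m : ℕ} {g : Equiv.Perm M.pathTree.V}
    (hg : g ∈ M.pathTree.autGroup)
    (hfix : ∀ x : M.pathTree.V, x.1.length ≤ m → g x = x)
    (htake : ∀ x : M.pathTree.V, (g x).1.take m = x.1.take m) :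
    g ∈ Gsup M m := by
  classical
  have hfin : Finite {v : M.pathTree.V // v.1.length = m} := by
    have h1 : Finite {l : List A | l.length = m} := (List.finite_length_eq A m).to_subtype
    exact Finite.of_injective
      (fun v : {v : M.pathTree.V // v.1.length = m} =>
        (⟨v.1.1, v.2⟩ : {l : List A | l.length = m}))
      (by
        intro v w h
        simp only [Subtype.mk.injEq] at h
        apply Subtype.ext
        apply Subtype.ext
        exact h)
  letI : Fintype {v : M.pathTree.V // v.1.length = m} := Fintype.ofFinite _
  suffices key : ∀ S : Finset {v : M.pathTree.V // v.1.length = m},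
      ∀ g' : Equiv.Perm M.pathTree.V, g' ∈ M.pathTree.autGroup →
      (∀ x : M.pathTree.V, x.1.length ≤ m → g' x = x) →
      (∀ x : M.pathTree.V, (g' x).1.take m = x.1.take m) →
      (∀ x : M.pathTree.V, (∀ v ∈ S, ¬ (v.1.1 <+: x.1)) → g' x = x) →
      g' ∈ Gsup M m by
    apply key Finset.univ g hg hfix htake
    intro x hx
    by_cases hlen : x.1.length < m
    · exact hfix x hlen.le
    · exfalso
      have hvx : (M.run M.init (x.1.take m)).isSome := by
        apply M.isSome_of_append (w := x.1.drop m)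
        rw [List.take_append_drop]
        exact x.2
      refine hx ⟨⟨x.1.take m, hvx⟩, ?_⟩ (Finset.mem_univ _) (List.take_prefix m x.1)
      show (x.1.take m).length = m
      rw [List.length_take]
      omega
  intro S
  induction S using Finset.induction_on with
  | empty =>
    intro g' _ _ _ hout
    have h1 : g' = 1 := Equiv.ext fun x => hout x (by simp)
    rw [h1]
    exact one_mem _
  | @insert w S hwS ih =>
    intro g' hg' hfix' htake' hout
    have hCiff : ∀ (h : Equiv.Perm M.pathTree.V),
        (∀ x : M.pathTree.V, (h x).1.take m = x.1.take m) →
        ∀ x : M.pathTree.V, (w.1.1 <+: (h x).1 ↔ w.1.1 <+: x.1) := by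
      intro h ht x
      have hchar : ∀ y : M.pathTree.V, (w.1.1 <+: y.1 ↔ y.1.take m = w.1.1) := by
        intro y
        constructor
        · intro hp
          have h1 := List.prefix_iff_eq_take.mp hp
          rw [w.2] at h1
          exact h1.symm
        · intro h1
          rw [← h1]
          exact List.take_prefix m y.1
      rw [hchar, hchar, ht x]
    have hinvtake : ∀ x : M.pathTree.V, (g'⁻¹ x).1.take m = x.1.take m := by
      intro x
      have h1 := htake' (g'⁻¹ x)
      rw [Equiv.Perm.coe_inv, Equiv.apply_symm_apply] at h1
      exact h1.symm
    have hinvfix : ∀ x : M.pathTree.V, x.1.length ≤ m → g'⁻¹ x = x := by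
      intro x hx
      apply g'.injective
      show g' (g'⁻¹ x) = g' x
      rw [Equiv.Perm.coe_inv, Equiv.apply_symm_apply, hfix' x hx]
    set g₁ : Equiv.Perm M.pathTree.V :=
      restrictPerm g' (fun x => w.1.1 <+: x.1) (hCiff g' htake') with hg₁def
    have hg₁app : ∀ x, g₁ x = if w.1.1 <+: x.1 then g' x else x := fun x => rfl
    have hg₁inv : ∀ x, g₁⁻¹ x = if w.1.1 <+: x.1 then g'⁻¹ x else x := fun x => rfl
    have hg₁aut : g₁ ∈ M.pathTree.autGroup := by
      apply autCrit
      · rw [hg₁app]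
        by_cases hr : w.1.1 <+: (M.pathTree.root).1
        · rw [if_pos hr, (mem_autGroup_iff.mp hg').1]
        · rw [if_neg hr]
      · intro x y h
        rw [hg₁app, hg₁app]
        exact restrict_adj hg' w.2 hfix' x y h
      · intro x y h
        rw [hg₁inv, hg₁inv]
        exact restrict_adj (inv_mem hg') w.2 hinvfix x y h
    have hg₁mem : g₁ ∈ Gsup M m := by
      have h1 : g₁ ∈ M.pathTree.rist w.1 := by
        refine mem_rist_iff.mpr ⟨hg₁aut, mem_fixOutside_iff.mpr ?_⟩
        intro u hu
        rw [hg₁app, if_neg (fun hp => hu (reach_iff.mpr hp))]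
      exact le_iSup₂ (f := fun v (_ : v ∈ {v : M.pathTree.V | v.1.length = m}) =>
        M.pathTree.rist v) w.1 w.2 h1
    have hg₁invtake : ∀ x : M.pathTree.V, (g₁⁻¹ x).1.take m = x.1.take m := by
      intro x
      rw [hg₁inv]
      by_cases hC : w.1.1 <+: x.1
      · rw [if_pos hC]; exact hinvtake x
      · rw [if_neg hC]
    have hmain : g' = g₁ * (g₁⁻¹ * g') := by group
    rw [hmain]
    refine mul_mem hg₁mem (ih (g₁⁻¹ * g') (mul_mem (inv_mem hg₁aut) hg') ?_ ?_ ?_)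
    · intro x hx
      show g₁⁻¹ (g' x) = x
      rw [hfix' x hx, hg₁inv]
      by_cases hC : w.1.1 <+: x.1
      · rw [if_pos hC]; exact hinvfix x hx
      · rw [if_neg hC]
    · intro x
      show ((g₁⁻¹ (g' x)).1.take m) = x.1.take m
      rw [hg₁invtake, htake']
    · intro x hx
      show g₁⁻¹ (g' x) = x
      by_cases hC : w.1.1 <+: x.1
      · have hC2 : w.1.1 <+: (g' x).1 := (hCiff g' htake' x).mpr hC
        rw [hg₁inv, if_pos hC2]
        simp
      · have hgx : g' x = x := by
          apply hout
          intro v hv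
          rcases Finset.mem_insert.mp hv with rfl | hv2
          · exact hC
          · exact hx v hv2
        rw [hgx, hg₁inv, if_neg hC]

end Tree

section Phi

variable {A : Type} {M : PDFA A} {n : ℕ}

lemma runq' (w : List A) (q : M.Q) (hq : M.run M.init w = some q) (a : A) :
    M.run M.init (w ++ [a]) = M.δ q a := by
  rw [PDFA.run_append, hq, Option.bind_some, run_cons]
  cases hd : M.δ q a <;> simp [PDFA.run]

lemma lang_ext' (l : List A) (q : M.Q) (hq : M.run M.init l = some q) (u : List A) :
    lang M q u ↔ (M.run M.init (l ++ u)).isSome := by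
  rw [lang, PDFA.run_append, hq, Option.bind_some]

lemma lang_ext (x : M.pathTree.V) (u : List A) :
    lang M (M.qstate x.1 x.2) u ↔ (M.run M.init (x.1 ++ u)).isSome :=
  lang_ext' x.1 (M.qstate x.1 x.2) (Option.some_get x.2).symm u

/-- The local permutation of `g` at the level-`n` vertex `v`. -/
noncomputable def tauFun (n : ℕ) (g : Equiv.Perm M.pathTree.V)
    (v : {v : M.pathTree.V // v.1.length = n}) (a : A) : A :=
  if h : (M.run M.init (v.1.1 ++ [a])).isSome then
    (g ⟨v.1.1 ++ [a], h⟩).1.getLastD a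
  else a

lemma tau_id_of_not (g : Equiv.Perm M.pathTree.V) (v : {v : M.pathTree.V // v.1.length = n})
    (a : A) (h : ¬ (M.run M.init (v.1.1 ++ [a])).isSome) : tauFun n g v a = a :=
  dif_neg h

lemma tau_spec {g : Equiv.Perm M.pathTree.V} (hg : g ∈ Gsup M n)
    (v : {v : M.pathTree.V // v.1.length = n}) (a : A)
    (h : (M.run M.init (v.1.1 ++ [a])).isSome) :
    ∃ hb : (M.run M.init (v.1.1 ++ [tauFun n g v a])).isSome,
      g ⟨v.1.1 ++ [a], h⟩ = ⟨v.1.1 ++ [tauFun n g v a], hb⟩ := by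
  have hfix : g v.1 = v.1 := Gsup_le_fixShort M n hg v.1 (le_of_eq v.2)
  obtain ⟨b, hb⟩ := autStep (Gsup_le_aut M n hg) v.1 a h
  rw [hfix] at hb
  have htau : tauFun n g v a = b := by
    rw [tauFun, dif_pos h, hb]
    exact List.getLastD_concat
  subst htau
  exact ⟨by rw [← hb]; exact (g ⟨v.1.1 ++ [a], h⟩).2, Subtype.ext hb⟩

lemma tau_uniq {g : Equiv.Perm M.pathTree.V}
    {v : {v : M.pathTree.V // v.1.length = n}} {a b : A}
    {h : (M.run M.init (v.1.1 ++ [a])).isSome}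
    {hb : (M.run M.init (v.1.1 ++ [b])).isSome}
    (heq : g ⟨v.1.1 ++ [a], h⟩ = ⟨v.1.1 ++ [b], hb⟩) : tauFun n g v a = b := by
  rw [tauFun, dif_pos h, heq]
  exact List.getLastD_concat

lemma tau_leftinv {g : Equiv.Perm M.pathTree.V} (hg : g ∈ Gsup M n)
    (v : {v : M.pathTree.V // v.1.length = n}) (a : A) :
    tauFun n g⁻¹ v (tauFun n g v a) = a := by
  by_cases h : (M.run M.init (v.1.1 ++ [a])).isSome
  · obtain ⟨hb, hgb⟩ := tau_spec hg v a h
    apply tau_uniq (g := g⁻¹) (h := hb) (hb := h)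
    rw [← hgb]
    exact Equiv.symm_apply_apply _ _
  · rw [tau_id_of_not _ _ _ h, tau_id_of_not _ _ _ h]

/-- The local permutation as a permutation of the alphabet. -/
noncomputable def tauPerm (n : ℕ) (g : ↥(Gsup M n))
    (v : {v : M.pathTree.V // v.1.length = n}) : Equiv.Perm A where
  toFun := tauFun n g.1 v
  invFun := tauFun n (g.1)⁻¹ v
  left_inv := fun a => tau_leftinv g.2 v a
  right_inv := by
    intro a
    have h := tau_leftinv (g := (g.1)⁻¹) (inv_mem g.2) v a
    simpa using h

lemma perm_cone {g : Equiv.Perm M.pathTree.V} (hg : g ∈ M.pathTree.autGroup)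
    {x y : M.pathTree.V} (hxy : g x = y) :
    ∃ f, WIso (lang M (M.qstate x.1 x.2)) (lang M (M.qstate y.1 y.2)) f := by
  classical
  have hlen : y.1.length = x.1.length := by
    rw [← hxy]
    exact len_eq hg x.1 x.2
  have key : ∀ (u : List A) (h : (M.run M.init (x.1 ++ u)).isSome),
      ∃ z, (g ⟨x.1 ++ u, h⟩).1 = y.1 ++ z ∧ z.length = u.length := by
    intro u h
    obtain ⟨z, hz, hzl⟩ := appext hg u x.1 x.2 h
    refine ⟨z, ?_, hzl⟩
    rw [hz]
    congr 1
    rw [← hxy]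
    rfl
  have dropkey : ∀ z : List A, (y.1 ++ z).drop x.1.length = z := by
    intro z
    rw [← hlen]
    exact List.drop_left
  refine ⟨fun u => if h : (M.run M.init (x.1 ++ u)).isSome then
    (g ⟨x.1 ++ u, h⟩).1.drop x.1.length else [], ?_, ?_, ?_, ?_, ?_, ?_⟩
  · have h0 : (M.run M.init (x.1 ++ [])).isSome := by simpa using x.2
    rw [dif_pos h0]
    obtain ⟨z, hz, hzl⟩ := key [] h0
    rw [hz, dropkey]
    simpa using hzl
  · intro u hu
    have h := (lang_ext x u).mp hu
    rw [dif_pos h]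
    obtain ⟨z, hz, _⟩ := key u h
    rw [hz, dropkey]
    apply (lang_ext y z).mpr
    rw [← hz]
    exact (g ⟨x.1 ++ u, h⟩).2
  · intro u hu
    have h := (lang_ext x u).mp hu
    rw [dif_pos h]
    obtain ⟨z, hz, hzl⟩ := key u h
    rw [hz, dropkey, hzl]
  · intro u a hu
    have h2 := (lang_ext x (u ++ [a])).mp hu
    have h2' : (M.run M.init ((x.1 ++ u) ++ [a])).isSome := by
      rw [List.append_assoc]; exact h2
    have h1 : (M.run M.init (x.1 ++ u)).isSome := M.isSome_of_append h2'
    rw [dif_pos h2, dif_pos h1]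
    have hvx : (⟨x.1 ++ (u ++ [a]), h2⟩ : M.pathTree.V) = ⟨(x.1 ++ u) ++ [a], h2'⟩ :=
      Subtype.ext (show x.1 ++ (u ++ [a]) = (x.1 ++ u) ++ [a] from
        (List.append_assoc _ _ _).symm)
    obtain ⟨b, hb⟩ := autStep hg ⟨x.1 ++ u, h1⟩ a h2'
    refine ⟨b, ?_⟩
    rw [hvx, hb]
    have hglen : x.1.length ≤ (g ⟨x.1 ++ u, h1⟩).1.length := by
      rw [len_eq hg]
      simp
    rw [List.drop_append_of_le_length hglen]
  · intro u u' hu hu' heq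
    have h := (lang_ext x u).mp hu
    have h' := (lang_ext x u').mp hu'
    rw [dif_pos h, dif_pos h'] at heq
    obtain ⟨z, hz, _⟩ := key u h
    obtain ⟨z', hz', _⟩ := key u' h'
    rw [hz, dropkey, hz', dropkey] at heq
    have hgeq : (⟨x.1 ++ u, h⟩ : M.pathTree.V) = ⟨x.1 ++ u', h'⟩ :=
      g.injective (Subtype.ext (by rw [hz, hz', heq]))
    exact List.append_cancel_left (congrArg Subtype.val hgeq)
  · intro z hzl
    have hyz := (lang_ext y z).mp hzl
    have hinv : g⁻¹ (⟨y.1, y.2⟩ : M.pathTree.V) = x := by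
      rw [← hxy]
      exact Equiv.symm_apply_apply _ _
    obtain ⟨z', hz', hzl'⟩ := appext (inv_mem hg) z y.1 y.2 hyz
    rw [hinv] at hz'
    have h' : (M.run M.init (x.1 ++ z')).isSome := by
      rw [← hz']
      exact (g⁻¹ ⟨y.1 ++ z, hyz⟩).2
    refine ⟨z', (lang_ext x z').mpr h', ?_⟩
    rw [dif_pos h']
    have hgz : g ⟨x.1 ++ z', h'⟩ = ⟨y.1 ++ z, hyz⟩ := by
      have hx' : (⟨x.1 ++ z', h'⟩ : M.pathTree.V) = g⁻¹ ⟨y.1 ++ z, hyz⟩ :=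
        Subtype.ext hz'.symm
      rw [hx']
      exact Equiv.apply_symm_apply _ _
    rw [hgz]
    exact dropkey z

lemma mem_symq_iff {q : M.Q} {τ : Equiv.Perm A} :
    τ ∈ M.SymQ q ↔ ∀ a, M.δ q (τ a) = M.δ q a ∧ (M.δ q a = none → τ a = a) :=
  Iff.rfl

lemma tau_mem_symq (hfin : Finite A) (hne : Nonempty A) (hM : M.GeomMinimal)
    (g : ↥(Gsup M n)) (v : {v : M.pathTree.V // v.1.length = n}) :
    tauPerm n g v ∈ M.SymQ (M.qstate v.1.1 v.1.2) := by
  rw [mem_symq_iff]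
  intro a
  by_cases h : (M.run M.init (v.1.1 ++ [a])).isSome
  · obtain ⟨hb, hgb⟩ := tau_spec g.2 v a h
    have happ : (tauPerm n g v) a = tauFun n g.1 v a := rfl
    have hq : M.run M.init v.1.1 = some (M.qstate v.1.1 v.1.2) :=
      (Option.some_get v.1.2).symm
    constructor
    · rw [happ, ← runq' v.1.1 _ hq a, ← runq' v.1.1 _ hq (tauFun n g.1 v a)]
      have h1 : (M.run M.init (v.1.1 ++ [tauFun n g.1 v a])).get hb =
          (M.run M.init (v.1.1 ++ [a])).get h := by
        apply states_eq hfin hne hM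
        exact perm_cone (inv_mem (Gsup_le_aut M n g.2))
          (x := ⟨v.1.1 ++ [tauFun n g.1 v a], hb⟩) (y := ⟨v.1.1 ++ [a], h⟩)
          (by rw [← hgb]; exact Equiv.symm_apply_apply _ _)
      rw [← Option.some_get hb, ← Option.some_get h, h1]
    · intro hnone
      exfalso
      rw [← runq' v.1.1 _ hq a] at hnone
      rw [hnone] at h
      simp at h
  · have happ : (tauPerm n g v) a = a := tau_id_of_not g.1 v a h
    exact ⟨by rw [happ], fun _ => happ⟩

/-- The homomorphism `σₙ`. -/
noncomputable def phi (hfin : Finite A) (hne : Nonempty A) (hM : M.GeomMinimal) (n : ℕ) :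
    ↥(Gsup M n) →*
      (∀ v : {v : M.pathTree.V // v.1.length = n}, ↥(M.SymQ (M.qstate v.1.1 v.1.2))) where
  toFun := fun g v => ⟨tauPerm n g v, tau_mem_symq hfin hne hM g v⟩
  map_one' := by
    funext v
    apply Subtype.ext
    apply Equiv.ext
    intro a
    show tauFun n ((1 : ↥(Gsup M n)) : Equiv.Perm M.pathTree.V) v a = a
    by_cases h : (M.run M.init (v.1.1 ++ [a])).isSome
    · rw [tauFun, dif_pos h]
      exact List.getLastD_concat
    · exact dif_neg h
  map_mul' := by
    intro g h
    funext v
    apply Subtype.ext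
    apply Equiv.ext
    intro a
    show tauFun n (g.1 * h.1) v a = tauFun n g.1 v (tauFun n h.1 v a)
    by_cases hva : (M.run M.init (v.1.1 ++ [a])).isSome
    · obtain ⟨hb1, hgb1⟩ := tau_spec h.2 v a hva
      obtain ⟨hb2, hgb2⟩ := tau_spec g.2 v (tauFun n h.1 v a) hb1
      apply tau_uniq (g := g.1 * h.1) (h := hva) (hb := hb2)
      show g.1 (h.1 _) = _
      rw [hgb1, hgb2]
    · have h1 : tauFun n h.1 v a = a := dif_neg hva
      rw [h1, tau_id_of_not _ _ _ hva, tau_id_of_not _ _ _ hva]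

lemma phi_spec (hfin : Finite A) (hne : Nonempty A) (hM : M.GeomMinimal)
    (g : ↥(Gsup M n)) (v : {v : M.pathTree.V // v.1.length = n})
    (w : M.pathTree.V) (a : A) (hw : w.1 = v.1.1 ++ [a]) :
    (g.1 w).1 = (g.1 v.1).1 ++ [(phi hfin hne hM n g v).1 a] := by
  have hfixv : g.1 v.1 = v.1 := Gsup_le_fixShort M n g.2 v.1 (le_of_eq v.2)
  have hiso : (M.run M.init (v.1.1 ++ [a])).isSome := by rw [← hw]; exact w.2
  have hww : w = ⟨v.1.1 ++ [a], hiso⟩ := Subtype.ext hw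
  obtain ⟨hb, hgb⟩ := tau_spec g.2 v a hiso
  rw [hww, hgb, hfixv]
  rfl

lemma phi_ker (hfin : Finite A) (hne : Nonempty A) (hM : M.GeomMinimal) (n : ℕ) :
    (phi (M := M) hfin hne hM n).ker =
      (Gsup M (n + 1)).comap (Gsup M n).subtype := by
  ext g
  rw [MonoidHom.mem_ker, Subgroup.mem_comap]
  show _ ↔ g.1 ∈ Gsup M (n + 1)
  constructor
  · intro hphi
    have htau : ∀ (v : {v : M.pathTree.V // v.1.length = n}) (a : A),
        tauFun n g.1 v a = a := by
      intro v a
      have h1 := congrFun hphi v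
      have h2 : (phi (M := M) hfin hne hM n g v).1 = (1 : Equiv.Perm A) := by
        rw [h1]; rfl
      calc tauFun n g.1 v a = (phi (M := M) hfin hne hM n g v).1 a := rfl
      _ = a := by rw [h2]; rfl
    have hfix : ∀ x : M.pathTree.V, x.1.length ≤ n + 1 → g.1 x = x := by
      intro x hx
      rcases Nat.lt_or_ge x.1.length (n + 1) with hlt | hge
      · exact Gsup_le_fixShort M n g.2 x (by omega)
      · have hlen : x.1.length = n + 1 := by omega
        obtain ⟨l, a, hla⟩ : ∃ l a, x.1 = l ++ [a] := by
          rcases List.eq_nil_or_concat x.1 with h0 | ⟨l, a, h0⟩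
          · rw [h0] at hlen; simp at hlen
          · exact ⟨l, a, by simpa [List.concat_eq_append] using h0⟩
        have hl : (M.run M.init l).isSome :=
          M.isSome_of_append (by rw [← hla]; exact x.2)
        have hllen : l.length = n := by
          have h3 := congrArg List.length hla
          simp at h3
          omega
        have hiso : (M.run M.init (l ++ [a])).isSome := by rw [← hla]; exact x.2
        obtain ⟨hb, hgb⟩ := tau_spec g.2 (⟨⟨l, hl⟩, hllen⟩ :
          {v : M.pathTree.V // v.1.length = n}) a hiso
        have hxv : x = ⟨l ++ [a], hiso⟩ := Subtype.ext hla
        rw [hxv, hgb]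
        apply Subtype.ext
        show l ++ [tauFun n g.1 ⟨⟨l, hl⟩, hllen⟩ a] = l ++ [a]
        rw [htau ⟨⟨l, hl⟩, hllen⟩ a]
    exact decomp hfin (Gsup_le_aut M n g.2) hfix
      (fun x => take_preserved (Gsup_le_aut M n g.2) hfix x.1 x.2)
  · intro hmem
    have hfix := Gsup_le_fixShort M (n + 1) hmem
    funext v
    apply Subtype.ext
    apply Equiv.ext
    intro a
    show tauFun n g.1 v a = a
    by_cases hva : (M.run M.init (v.1.1 ++ [a])).isSome
    · apply tau_uniq (g := g.1) (h := hva) (hb := hva)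
      apply hfix
      show (v.1.1 ++ [a]).length ≤ n + 1
      have := v.2
      simp
      omega
    · exact dif_neg hva

end Phi

section SectionS

variable {A : Type} {M : PDFA A} {n : ℕ}

lemma take_level {v : {v : M.pathTree.V // v.1.length = n}} (b : A) (w : List A) :
    (v.1.1 ++ b :: w).take n = v.1.1 := by
  have h1 : (v.1.1 ++ b :: w).take (v.1.1.length) = v.1.1 := by simp
  rw [v.2] at h1
  exact h1

lemma drop_level {v : {v : M.pathTree.V // v.1.length = n}} (b : A) (w : List A) :
    (v.1.1 ++ b :: w).drop (n + 1) = w := by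
  have h1 : (v.1.1 ++ b :: w).drop (v.1.1.length + 1) = w := by
    rw [show v.1.1 ++ b :: w = (v.1.1 ++ [b]) ++ w by simp,
      show v.1.1.length + 1 = (v.1.1 ++ [b]).length by simp]
    exact List.drop_left
  rw [v.2] at h1
  exact h1

lemma run_repl (l : List A) (q : M.Q) (hq : M.run M.init l = some q) {a b : A}
    (hab : M.δ q b = M.δ q a) (r : List A) :
    M.run M.init (l ++ b :: r) = M.run M.init (l ++ a :: r) := by
  rw [PDFA.run_append, PDFA.run_append, hq, Option.bind_some, Option.bind_some,
    run_cons, run_cons, hab]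

/-- The level-`n` prefix vertex of a vertex of length `> n`. -/
def vOf (u : M.pathTree.V) (h : n < u.1.length) : {v : M.pathTree.V // v.1.length = n} :=
  ⟨⟨u.1.take n, M.isSome_of_append
      (by rw [List.take_append_drop]; exact u.2 :
        (M.run M.init (u.1.take n ++ u.1.drop n)).isSome)⟩,
    by rw [List.length_take]; omega⟩

/-- The action of a family of admissible permutations on the tree. -/
noncomputable def sFun
    (τ : ∀ v : {v : M.pathTree.V // v.1.length = n}, ↥(M.SymQ (M.qstate v.1.1 v.1.2)))
    (u : M.pathTree.V) : M.pathTree.V :=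
  if h : n < u.1.length then
    ⟨(vOf u h).1.1 ++ ((τ (vOf u h)).1 (u.1[n]'h)) :: u.1.drop (n + 1), by
      have hq : M.run M.init (vOf u h).1.1 =
          some (M.qstate (vOf u h).1.1 (vOf u h).1.2) :=
        (Option.some_get (vOf u h).1.2).symm
      have hab := (mem_symq_iff.mp (τ (vOf u h)).2 (u.1[n]'h)).1
      rw [run_repl (vOf u h).1.1 _ hq hab (u.1.drop (n + 1))]
      show (M.run M.init (u.1.take n ++ u.1[n]'h :: u.1.drop (n + 1))).isSome
      rw [← List.drop_eq_getElem_cons h, List.take_append_drop]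
      exact u.2⟩
  else u

lemma sFun_short
    (τ : ∀ v : {v : M.pathTree.V // v.1.length = n}, ↥(M.SymQ (M.qstate v.1.1 v.1.2)))
    (u : M.pathTree.V) (h : ¬ n < u.1.length) : sFun τ u = u := by
  simp only [sFun]
  exact dif_neg h

lemma sFun_spec
    (τ : ∀ v : {v : M.pathTree.V // v.1.length = n}, ↥(M.SymQ (M.qstate v.1.1 v.1.2)))
    (v : {v : M.pathTree.V // v.1.length = n}) (a : A) (r : List A)
    (h : (M.run M.init (v.1.1 ++ a :: r)).isSome) :
    ∃ h2 : (M.run M.init (v.1.1 ++ ((τ v).1 a) :: r)).isSome,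
      sFun τ ⟨v.1.1 ++ a :: r, h⟩ = ⟨v.1.1 ++ ((τ v).1 a) :: r, h2⟩ := by
  have hlt : n < (v.1.1 ++ a :: r).length := by
    have := v.2
    simp
    omega
  have hveq : vOf (⟨v.1.1 ++ a :: r, h⟩ : M.pathTree.V) hlt = v :=
    Subtype.ext (Subtype.ext (take_level a r))
  have hget : (v.1.1 ++ a :: r)[n]'hlt = a := by
    rw [List.getElem_append_right (le_of_eq v.2)]
    simp [v.2]
  have hdrop : (v.1.1 ++ a :: r).drop (n + 1) = r := drop_level a r
  have hq : M.run M.init v.1.1 = some (M.qstate v.1.1 v.1.2) :=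
    (Option.some_get v.1.2).symm
  have hab := (mem_symq_iff.mp (τ v).2 a).1
  have h2 : (M.run M.init (v.1.1 ++ ((τ v).1 a) :: r)).isSome := by
    rw [run_repl v.1.1 _ hq hab r]
    exact h
  refine ⟨h2, ?_⟩
  apply Subtype.ext
  rw [show sFun τ ⟨v.1.1 ++ a :: r, h⟩ = _ from dif_pos hlt]
  show (vOf (⟨v.1.1 ++ a :: r, h⟩ : M.pathTree.V) hlt).1.1 ++
      ((τ (vOf (⟨v.1.1 ++ a :: r, h⟩ : M.pathTree.V) hlt)).1 ((v.1.1 ++ a :: r)[n]'hlt)) ::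
      (v.1.1 ++ a :: r).drop (n + 1) = v.1.1 ++ ((τ v).1 a) :: r
  rw [hveq, hget, hdrop]

lemma vertex_decomp (u : M.pathTree.V) (h : n < u.1.length) :
    ∃ (a : A) (r : List A) (hh : (M.run M.init ((vOf u h).1.1 ++ a :: r)).isSome),
      u = ⟨(vOf u h).1.1 ++ a :: r, hh⟩ := by
  have hx1 : u.1 = (vOf u h).1.1 ++ u.1[n]'h :: u.1.drop (n + 1) := by
    show u.1 = u.1.take n ++ u.1[n]'h :: u.1.drop (n + 1)
    rw [← List.drop_eq_getElem_cons h, List.take_append_drop]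
  have hh : (M.run M.init ((vOf u h).1.1 ++ u.1[n]'h :: u.1.drop (n + 1))).isSome := by
    rw [← hx1]; exact u.2
  exact ⟨u.1[n]'h, u.1.drop (n + 1), hh, Subtype.ext hx1⟩

lemma s_leftinv
    (τ : ∀ v : {v : M.pathTree.V // v.1.length = n}, ↥(M.SymQ (M.qstate v.1.1 v.1.2)))
    (u : M.pathTree.V) : sFun τ⁻¹ (sFun τ u) = u := by
  by_cases h : n < u.1.length
  · obtain ⟨a, r, hh, hu⟩ := vertex_decomp u h
    set v := vOf u h
    rw [hu]
    obtain ⟨h2, hs⟩ := sFun_spec τ v a r hh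
    rw [hs]
    obtain ⟨h3, hs2⟩ := sFun_spec τ⁻¹ v ((τ v).1 a) r h2
    rw [hs2]
    apply Subtype.ext
    show v.1.1 ++ ((τ⁻¹ v).1 ((τ v).1 a)) :: r = v.1.1 ++ a :: r
    have hinv : (τ⁻¹ v).1 ((τ v).1 a) = a := by
      rw [Pi.inv_apply]
      rw [InvMemClass.coe_inv]
      simp
    rw [hinv]
  · rw [sFun_short τ u h, sFun_short τ⁻¹ u h]

/-- The action as a permutation of the tree. -/
noncomputable def sPerm
    (τ : ∀ v : {v : M.pathTree.V // v.1.length = n}, ↥(M.SymQ (M.qstate v.1.1 v.1.2))) :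
    Equiv.Perm M.pathTree.V where
  toFun := sFun τ
  invFun := sFun τ⁻¹
  left_inv := s_leftinv τ
  right_inv := by
    intro u
    have h := s_leftinv τ⁻¹ u
    simpa using h

lemma sAdj
    (τ : ∀ v : {v : M.pathTree.V // v.1.length = n}, ↥(M.SymQ (M.qstate v.1.1 v.1.2))) :
    ∀ x y, M.pathTree.Adj x y → M.pathTree.Adj (sFun τ x) (sFun τ y) := by
  intro x y hadj
  obtain ⟨c, hc⟩ := adj_iff.mp hadj
  rcases Nat.lt_trichotomy x.1.length n with hlt | heqn | hgt
  · have hy : ¬ n < y.1.length := by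
      rw [hc]
      simp
      omega
    rw [sFun_short τ x (by omega), sFun_short τ y hy]
    exact hadj
  · have hvx : (⟨x, heqn⟩ : {v : M.pathTree.V // v.1.length = n}).1.1 = x.1 := rfl
    have hh : (M.run M.init (x.1 ++ c :: [])).isSome := by
      rw [show x.1 ++ c :: [] = x.1 ++ [c] from rfl, ← hc]
      exact y.2
    have hyy : y = ⟨x.1 ++ c :: [], hh⟩ := Subtype.ext hc
    rw [hyy]
    obtain ⟨h2, hs⟩ := sFun_spec τ ⟨x, heqn⟩ c [] hh
    rw [hs, sFun_short τ x (by omega)]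
    apply adj_iff.mpr
    exact ⟨(τ ⟨x, heqn⟩).1 c, rfl⟩
  · obtain ⟨a, r, hh, hu⟩ := vertex_decomp x hgt
    set v := vOf x hgt
    have hh2 : (M.run M.init (v.1.1 ++ a :: (r ++ [c]))).isSome := by
      rw [show v.1.1 ++ a :: (r ++ [c]) = (v.1.1 ++ a :: r) ++ [c] by simp]
      rw [show v.1.1 ++ a :: r = x.1 from (congrArg Subtype.val hu).symm, ← hc]
      exact y.2
    have hyy : y = ⟨v.1.1 ++ a :: (r ++ [c]), hh2⟩ := by
      apply Subtype.ext
      show y.1 = v.1.1 ++ a :: (r ++ [c])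
      rw [hc, show v.1.1 ++ a :: (r ++ [c]) = (v.1.1 ++ a :: r) ++ [c] by simp,
        show v.1.1 ++ a :: r = x.1 from (congrArg Subtype.val hu).symm]
    obtain ⟨h3, hs3⟩ := sFun_spec τ v a r hh
    obtain ⟨h4, hs4⟩ := sFun_spec τ v a (r ++ [c]) hh2
    rw [hu, hyy, hs3, hs4]
    apply adj_iff.mpr
    refine ⟨c, ?_⟩
    show v.1.1 ++ ((τ v).1 a) :: (r ++ [c]) = (v.1.1 ++ ((τ v).1 a) :: r) ++ [c]
    simp

lemma sPerm_mem (hfin : Finite A)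
    (τ : ∀ v : {v : M.pathTree.V // v.1.length = n}, ↥(M.SymQ (M.qstate v.1.1 v.1.2))) :
    sPerm τ ∈ Gsup M n := by
  have hfix : ∀ x : M.pathTree.V, x.1.length ≤ n → sPerm τ x = x := by
    intro x hx
    exact sFun_short τ x (by omega)
  have haut : sPerm τ ∈ M.pathTree.autGroup := by
    apply autCrit
    · exact hfix _ (Nat.zero_le n)
    · intro x y h
      exact sAdj τ x y h
    · intro x y h
      show M.pathTree.Adj (sFun τ⁻¹ x) (sFun τ⁻¹ y)
      exact sAdj τ⁻¹ x y h
  apply decomp hfin haut hfix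
  intro x
  by_cases h : n < x.1.length
  · obtain ⟨a, r, hh, hu⟩ := vertex_decomp x h
    obtain ⟨h2, hs⟩ := sFun_spec τ (vOf x h) a r hh
    show (sFun τ x).1.take n = x.1.take n
    rw [hu, hs]
    show ((vOf x h).1.1 ++ ((τ (vOf x h)).1 a) :: r).take n =
      ((vOf x h).1.1 ++ a :: r).take n
    rw [take_level, take_level]
  · rw [hfix x (by omega)]

/-- The group-theoretic section. -/
noncomputable def sHom (hfin : Finite A) :
    (∀ v : {v : M.pathTree.V // v.1.length = n}, ↥(M.SymQ (M.qstate v.1.1 v.1.2))) →*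
      ↥(Gsup M n) where
  toFun := fun τ => ⟨sPerm τ, sPerm_mem hfin τ⟩
  map_one' := by
    apply Subtype.ext
    apply Equiv.ext
    intro u
    show sFun 1 u = u
    by_cases h : n < u.1.length
    · obtain ⟨a, r, hh, hu⟩ := vertex_decomp u h
      obtain ⟨h2, hs⟩ := sFun_spec 1 (vOf u h) a r hh
      rw [hu, hs]
      apply Subtype.ext
      show (vOf u h).1.1 ++ (((1 : ∀ v : {v : M.pathTree.V // v.1.length = n},
        ↥(M.SymQ (M.qstate v.1.1 v.1.2))) (vOf u h)).1 a) :: r = (vOf u h).1.1 ++ a :: r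
      rfl
    · exact sFun_short 1 u h
  map_mul' := by
    intro τ σ
    apply Subtype.ext
    apply Equiv.ext
    intro u
    show sFun (τ * σ) u = sFun τ (sFun σ u)
    by_cases h : n < u.1.length
    · obtain ⟨a, r, hh, hu⟩ := vertex_decomp u h
      obtain ⟨h2, hs2⟩ := sFun_spec σ (vOf u h) a r hh
      obtain ⟨h3, hs3⟩ := sFun_spec τ (vOf u h) ((σ (vOf u h)).1 a) r h2
      obtain ⟨h4, hs4⟩ := sFun_spec (τ * σ) (vOf u h) a r hh
      rw [hu, hs4, hs2, hs3]
      apply Subtype.ext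
      show (vOf u h).1.1 ++ (((τ * σ) (vOf u h)).1 a) :: r =
        (vOf u h).1.1 ++ ((τ (vOf u h)).1 ((σ (vOf u h)).1 a)) :: r
      rfl
    · rw [sFun_short (τ * σ) u h, sFun_short σ u h, sFun_short τ u h]

lemma phi_comp_s (hfin : Finite A) (hne : Nonempty A) (hM : M.GeomMinimal) :
    (phi (M := M) hfin hne hM n).comp (sHom hfin) = MonoidHom.id _ := by
  apply MonoidHom.ext
  intro τ
  funext v
  apply Subtype.ext
  apply Equiv.ext
  intro a
  show tauFun n (sPerm τ) v a = (τ v).1 a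
  by_cases hva : (M.run M.init (v.1.1 ++ [a])).isSome
  · obtain ⟨h2, hs⟩ := sFun_spec τ v a [] hva
    exact tau_uniq (g := sPerm τ) (h := hva) (hb := h2) hs
  · rw [tau_id_of_not _ _ _ hva]
    have hq : M.run M.init v.1.1 = some (M.qstate v.1.1 v.1.2) :=
      (Option.some_get v.1.2).symm
    have hnone : M.δ (M.qstate v.1.1 v.1.2) a = none := by
      rw [← runq' v.1.1 _ hq a]
      exact Option.not_isSome_iff_eq_none.mp hva
    exact ((mem_symq_iff.mp (τ v).2 a).2 hnone).symm

end SectionS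

end Stmt19Aux

/-- Split exact sequence of rigid level stabilizers. Let `M` be a
geometrically minimal DFA with path language tree `T` and let `n ∈ ℕ`. There is a
group homomorphism `σₙ` from `Rist(n)` to `Sym(n) = ∏_{v ∈ ℒ, |v| = n} Sym(q(v))`
sending `g` to its family of local permutations at the words of length `n` (in
particular all local injections of elements of `Rist(n)` at level `n` are admissible),
and `σₙ` is surjective, has kernel `Rist(n + 1)` and admits a group-theoretic section;
thus `1 → Rist(n+1) → Rist(n) → Sym(n) → 1` is split exact and `Rist(n)` is a
semidirect product of `Sym(n)` with `Rist(n + 1)`. -/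
theorem stmt19 {A : Type} (hfin : Finite A) (hne : Nonempty A)
    (M : PDFA A) (hM : M.GeomMinimal) (n : ℕ) :
    ∃ φ : ↥(⨆ v ∈ {v : M.pathTree.V | v.1.length = n}, M.pathTree.rist v) →*
        (∀ v : {v : M.pathTree.V // v.1.length = n}, ↥(M.SymQ (M.qstate v.1.1 v.1.2))),
      (∀ g : ↥(⨆ v ∈ {v : M.pathTree.V | v.1.length = n}, M.pathTree.rist v),
        ∀ v : {v : M.pathTree.V // v.1.length = n},
        ∀ (w : M.pathTree.V) (a : A), w.1 = v.1.1 ++ [a] →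
          (g.1 w).1 = (g.1 v.1).1 ++ [(φ g v).1 a]) ∧
      Function.Surjective φ ∧
      φ.ker = (⨆ v ∈ {v : M.pathTree.V | v.1.length = n + 1}, M.pathTree.rist v).comap
        (⨆ v ∈ {v : M.pathTree.V | v.1.length = n}, M.pathTree.rist v).subtype ∧
      ∃ s : (∀ v : {v : M.pathTree.V // v.1.length = n},
              ↥(M.SymQ (M.qstate v.1.1 v.1.2))) →*
            ↥(⨆ v ∈ {v : M.pathTree.V | v.1.length = n}, M.pathTree.rist v),
        φ.comp s = MonoidHom.id _ := by
  classical
  refine ⟨Stmt19Aux.phi hfin hne hM n, ?_, ?_, ?_,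
    ⟨Stmt19Aux.sHom hfin, Stmt19Aux.phi_comp_s hfin hne hM⟩⟩
  · intro g v w a hw
    exact Stmt19Aux.phi_spec hfin hne hM g v w a hw
  · intro τ
    refine ⟨Stmt19Aux.sHom hfin τ, ?_⟩
    have h := Stmt19Aux.phi_comp_s (M := M) (n := n) hfin hne hM
    exact DFunLike.congr_fun h τ
  · exact Stmt19Aux.phi_ker hfin hne hM n
end
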